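/- arXiv:2308.13771 — 4 statements merged into one kernel-verified Lean document; each statement's English description precedes it below -/
import Mathlib

section
/- Let A and B be unital C*-algebras and let φ : A → B be a completely positive map. If (X₁, σ₁, e₁) and (X₂, σ₂, e₂) are two Paschke dilations of φ, then there exists a Hilbert B-module isomorphism (a unitary adjointable map) W : X₁ → X₂ such that W e₁ = e₂ and W σ₁(a) W* = σ₂(a) for all a ∈ A. -/
/-!
STATEMENT 1: Uniqueness of the Paschke dilation.  If `(X₁, σ₁, e₁)` and `(X₂, σ₂, e₂)`
are two Paschke dilations of a completely positive map `φ : A → B`, then there is a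
Hilbert `B`-module isomorphism `W : X₁ → X₂` with `W e₁ = e₂` and `W σ₁(a) W* = σ₂(a)`
for all `a ∈ A`.
-/

open scoped ComplexOrder

noncomputable section

/-- A map `φ : A → B` between unital C*-algebras is completely positive:
it is linear and `∑ i j, bᵢ* φ(aᵢ* aⱼ) bⱼ` is positive for all finite families;
positivity in `B` is expressed by being of the form `b* b`. -/
def IsCPMapCStar (A : Type) [Ring A] [StarRing A] [Algebra ℂ A]
    (B : Type) [CStarAlgebra B] (φ : A → B) : Prop :=
  (∀ x y, φ (x + y) = φ x + φ y) ∧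
  (∀ (c : ℂ) (x : A), φ (c • x) = c • φ x) ∧
  ∀ (n : ℕ) (a : Fin n → A) (b : Fin n → B),
    ∃ c : B, ∑ i, ∑ j, star (b i) * φ (star (a i) * a j) * b j = star c * c

/-- The data and axioms of a Hilbert `B`-module structure on `X`: a right `B`-module
with a `B`-valued inner product satisfying Paschke's axioms, complete in the norm
`‖x‖ = ‖⟨x,x⟩‖^{1/2}` (the norm of `X` agrees with this norm). -/
structure HilbertModuleStruct (B : Type) [CStarAlgebra B]
    (X : Type) [NormedAddCommGroup X] [Module ℂ X] [CompleteSpace X] : Type where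
  /-- the `B`-valued inner product -/
  inner : X → X → B
  /-- the right action of `B` on `X` -/
  smulR : X → B → X
  inner_add_left : ∀ x y z, inner (x + y) z = inner x z + inner y z
  inner_smulC_left : ∀ (c : ℂ) (x y : X), inner (c • x) y = c • inner x y
  inner_star : ∀ x y, inner x y = star (inner y x)
  inner_smulR_left : ∀ x y b, inner (smulR x b) y = inner x y * b
  /-- `⟨x, x⟩ ≥ 0`, expressed by `⟨x, x⟩` being of the form `b* b` -/
  inner_self_pos : ∀ x, ∃ b : B, inner x x = star b * b
  inner_self_eq_zero : ∀ x, inner x x = 0 → x = 0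
  smulR_add : ∀ x b₁ b₂, smulR x (b₁ + b₂) = smulR x b₁ + smulR x b₂
  add_smulR : ∀ x y b, smulR (x + y) b = smulR x b + smulR y b
  smulR_mul : ∀ x b₁ b₂, smulR (smulR x b₁) b₂ = smulR x (b₁ * b₂)
  smulR_one : ∀ x, smulR x 1 = x
  smulC_smulR : ∀ (c : ℂ) x b, smulR (c • x) b = c • smulR x b
  smulR_smulC : ∀ (c : ℂ) x b, smulR x (c • b) = c • smulR x b
  norm_eq : ∀ x, ‖x‖ = Real.sqrt ‖inner x x‖

/-- `(X, σ, e)` (with Hilbert module structure `M` on `X`) is a Paschke dilation of the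
completely positive map `φ : A → B`:  `σ` is a unital `*`-representation of `A` by
adjointable operators on `X`, `φ(a) = ⟨σ(a) e, e⟩`, and `{σ(a)(e·b)}` is total in `X`. -/
def IsPaschkeDilation {A : Type} [Ring A] [StarRing A] [Algebra ℂ A]
    {B : Type} [CStarAlgebra B]
    {X : Type} [NormedAddCommGroup X] [Module ℂ X] [CompleteSpace X]
    (M : HilbertModuleStruct B X) (φ : A → B) (σ : A → X → X) (e : X) : Prop :=
  (∀ a : A, Continuous (σ a)) ∧
  (∀ (a : A) (x y : X), σ a (x + y) = σ a x + σ a y) ∧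
  (∀ (a : A) (c : ℂ) (x : X), σ a (c • x) = c • σ a x) ∧
  (∀ (a : A) (x : X) (b : B), σ a (M.smulR x b) = M.smulR (σ a x) b) ∧
  (∀ (a₁ a₂ : A) (x : X), σ (a₁ + a₂) x = σ a₁ x + σ a₂ x) ∧
  (∀ (c : ℂ) (a : A) (x : X), σ (c • a) x = c • σ a x) ∧
  (∀ (a₁ a₂ : A) (x : X), σ (a₁ * a₂) x = σ a₁ (σ a₂ x)) ∧
  (∀ x : X, σ 1 x = x) ∧
  (∀ (a : A) (x y : X), M.inner (σ a x) y = M.inner x (σ (star a) y)) ∧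
  (∀ a : A, φ a = M.inner (σ a e) e) ∧
  Dense (↑(Submodule.span ℂ {x : X | ∃ (a : A) (b : B), σ a (M.smulR e b) = x}) : Set X)

namespace HilbertModuleStruct
variable {B : Type} [CStarAlgebra B] {X : Type} [NormedAddCommGroup X]
  [Module ℂ X] [CompleteSpace X] (M : HilbertModuleStruct B X)

lemma inner_zero_left (y : X) : M.inner 0 y = 0 := by
  have h := M.inner_smulC_left 0 0 y
  simpa using h

lemma inner_zero_right (x : X) : M.inner x 0 = 0 := by
  rw [M.inner_star, M.inner_zero_left, star_zero]

lemma inner_add_right (x y z : X) : M.inner x (y + z) = M.inner x y + M.inner x z := by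
  rw [M.inner_star, M.inner_add_left, star_add, ← M.inner_star, ← M.inner_star]

lemma inner_smulC_right (c : ℂ) (x y : X) :
    M.inner x (c • y) = (starRingEnd ℂ c) • M.inner x y := by
  rw [M.inner_star, M.inner_smulC_left, star_smul, ← M.inner_star]
  rfl

lemma inner_smulR_right (x y : X) (b : B) :
    M.inner x (M.smulR y b) = star b * M.inner x y := by
  rw [M.inner_star, M.inner_smulR_left, star_mul, ← M.inner_star]

lemma inner_sub_left (x y z : X) : M.inner (x - y) z = M.inner x z - M.inner y z := by
  have h := M.inner_add_left (x - y) y z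
  rw [sub_add_cancel] at h
  rw [eq_sub_iff_add_eq, ← h]

lemma inner_sub_right (x y z : X) : M.inner x (y - z) = M.inner x y - M.inner x z := by
  rw [M.inner_star, M.inner_sub_left, star_sub, ← M.inner_star, ← M.inner_star]

lemma norm_sq (x : X) : ‖M.inner x x‖ = ‖x‖ ^ 2 := by
  rw [M.norm_eq, sq, Real.mul_self_sqrt (norm_nonneg _)]

lemma norm_smulR_le (x : X) (b : B) : ‖M.smulR x b‖ ≤ ‖b‖ * ‖x‖ := by
  have h1 : M.inner (M.smulR x b) (M.smulR x b) = star b * M.inner x x * b := by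
    rw [M.inner_smulR_left, M.inner_smulR_right, mul_assoc]
  have h2 : ‖M.inner (M.smulR x b) (M.smulR x b)‖ ≤ ‖b‖ ^ 2 * ‖x‖ ^ 2 := by
    rw [h1]
    calc ‖star b * M.inner x x * b‖ ≤ ‖star b * M.inner x x‖ * ‖b‖ := norm_mul_le _ _
      _ ≤ ‖star b‖ * ‖M.inner x x‖ * ‖b‖ := by
          gcongr; exact norm_mul_le _ _
      _ = ‖b‖ ^ 2 * ‖x‖ ^ 2 := by rw [norm_star, M.norm_sq]; ring
  rw [M.norm_eq]
  calc Real.sqrt ‖M.inner (M.smulR x b) (M.smulR x b)‖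
      ≤ Real.sqrt (‖b‖ ^ 2 * ‖x‖ ^ 2) := Real.sqrt_le_sqrt h2
    _ = ‖b‖ * ‖x‖ := by
        rw [← mul_pow, Real.sqrt_sq (by positivity)]

include M in
lemma norm_smulC (c : ℂ) (x : X) : ‖c • x‖ = ‖c‖ * ‖x‖ := by
  have h : M.inner (c • x) (c • x) = (c * starRingEnd ℂ c) • M.inner x x := by
    rw [M.inner_smulC_left, M.inner_smulC_right, smul_smul]
  rw [M.norm_eq, h, norm_smul, M.norm_eq]
  rw [Complex.mul_conj']
  have : ‖((‖c‖:ℂ) ^ 2)‖ = ‖c‖ ^ 2 := by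
    simp
  rw [this, Real.sqrt_mul (by positivity : (0:ℝ) ≤ ‖c‖^2),
    Real.sqrt_sq (norm_nonneg c)]

lemma cauchySchwarz (x y : X) : ‖M.inner x y‖ ≤ ‖x‖ * ‖y‖ := by
  letI := CStarAlgebra.spectralOrder B
  haveI := CStarAlgebra.spectralOrderedRing B
  rcases eq_or_ne x 0 with rfl | hx
  · simp [M.inner_zero_left]
  have hxn : (0:ℝ) < ‖x‖ := norm_pos_iff.mpr hx
  set u : X := (‖x‖⁻¹ : ℂ) • x with hu
  have hun : ‖u‖ = 1 := by
    rw [hu, M.norm_smulC]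
    simp [abs_of_pos hxn, inv_mul_cancel₀ hxn.ne']
  set b : B := M.inner y u with hb
  have hsa : IsSelfAdjoint (M.inner u u) := by
    rw [IsSelfAdjoint, ← M.inner_star]
  have huu_le : M.inner u u ≤ 1 := by
    have h1 := IsSelfAdjoint.le_algebraMap_norm_self (a := M.inner u u) hsa
    have h2 : ‖M.inner u u‖ = 1 := by rw [M.norm_sq, hun]; norm_num
    rw [h2, map_one] at h1
    exact h1
  have key : star b * b ≤ M.inner y y := by
    have hz : (0:B) ≤ M.inner (M.smulR u b - y) (M.smulR u b - y) := by
      obtain ⟨c, hc⟩ := M.inner_self_pos (M.smulR u b - y)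
      rw [hc]; exact star_mul_self_nonneg c
    have hub_ub : M.inner (M.smulR u b) (M.smulR u b) = star b * M.inner u u * b := by
      rw [M.inner_smulR_left, M.inner_smulR_right, mul_assoc]
    have hub_y : M.inner (M.smulR u b) y = star b * b := by
      rw [M.inner_smulR_left, M.inner_star (x := u), ← hb]
    have hy_ub : M.inner y (M.smulR u b) = star b * b := by
      rw [M.inner_smulR_right, ← hb]
    rw [M.inner_sub_left, M.inner_sub_right, M.inner_sub_right, hub_ub, hub_y, hy_ub] at hz
    have hconj : star b * M.inner u u * b ≤ star b * b := by
      have := star_left_conjugate_le_conjugate huu_le b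
      simpa using this
    have h3 : star b * b + star b * b ≤ star b * M.inner u u * b + M.inner y y := by
      calc star b * b + star b * b
          ≤ (star b * M.inner u u * b - star b * b - (star b * b - M.inner y y))
            + (star b * b + star b * b) := le_add_of_nonneg_left hz
        _ = star b * M.inner u u * b + M.inner y y := by abel
    have h4 : star b * b + star b * b ≤ star b * b + M.inner y y :=
      h3.trans (add_le_add hconj le_rfl)
    exact (add_le_add_iff_left (star b * b)).mp h4
  have hnb : ‖b‖ ≤ ‖y‖ := by
    have h5 : ‖star b * b‖ ≤ ‖M.inner y y‖ :=
      CStarAlgebra.norm_le_norm_of_nonneg_of_le (star_mul_self_nonneg b) key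
    rw [CStarRing.norm_star_mul_self, M.norm_sq] at h5
    nlinarith [norm_nonneg b, norm_nonneg y]
  have hbx : ‖b‖ = ‖x‖⁻¹ * ‖M.inner x y‖ := by
    rw [hb, hu, M.inner_smulC_right, norm_smul]
    congr 1
    · simp [abs_of_pos hxn]
    · rw [M.inner_star]; exact norm_star _
  have := mul_le_mul_of_nonneg_left hnb hxn.le
  rw [hbx, ← mul_assoc, mul_inv_cancel₀ hxn.ne', one_mul] at this
  exact this

lemma continuous_inner : Continuous (fun p : X × X => M.inner p.1 p.2) := by
  rw [continuous_iff_continuousAt]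
  intro p₀
  rw [ContinuousAt, tendsto_iff_norm_sub_tendsto_zero]
  have hbound : ∀ p : X × X, ‖M.inner p.1 p.2 - M.inner p₀.1 p₀.2‖ ≤
      ‖p.1 - p₀.1‖ * ‖p.2‖ + ‖p₀.1‖ * ‖p.2 - p₀.2‖ := by
    intro p
    have h1 : M.inner p.1 p.2 - M.inner p₀.1 p₀.2
        = M.inner (p.1 - p₀.1) p.2 + M.inner p₀.1 (p.2 - p₀.2) := by
      rw [M.inner_sub_left, M.inner_sub_right]; abel
    rw [h1]
    calc ‖M.inner (p.1 - p₀.1) p.2 + M.inner p₀.1 (p.2 - p₀.2)‖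
        ≤ ‖M.inner (p.1 - p₀.1) p.2‖ + ‖M.inner p₀.1 (p.2 - p₀.2)‖ := norm_add_le _ _
      _ ≤ ‖p.1 - p₀.1‖ * ‖p.2‖ + ‖p₀.1‖ * ‖p.2 - p₀.2‖ :=
          add_le_add (M.cauchySchwarz _ _) (M.cauchySchwarz _ _)
  have hcont : Continuous (fun p : X × X => ‖p.1 - p₀.1‖ * ‖p.2‖ + ‖p₀.1‖ * ‖p.2 - p₀.2‖) := by
    fun_prop
  have h0 : Filter.Tendsto (fun p : X × X => ‖p.1 - p₀.1‖ * ‖p.2‖ + ‖p₀.1‖ * ‖p.2 - p₀.2‖)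
      (nhds p₀) (nhds 0) := by
    have := hcont.tendsto p₀
    simpa using this
  exact squeeze_zero (fun p => norm_nonneg _) hbound h0

def smulRL (b : B) : X →ₗ[ℂ] X where
  toFun x := M.smulR x b
  map_add' x y := M.add_smulR x y b
  map_smul' c x := M.smulC_smulR c x b

include M in
lemma continuousConstSMul : ContinuousConstSMul ℂ X :=
  ⟨fun c => AddMonoidHomClass.continuous_of_bound (DistribMulAction.toAddMonoidHom X c) ‖c‖
    (fun x => le_of_eq (M.norm_smulC c x))⟩

lemma continuous_smulRL (b : B) : Continuous (M.smulRL b) :=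
  AddMonoidHomClass.continuous_of_bound (M.smulRL b) ‖b‖ (fun x => M.norm_smulR_le x b)

end HilbertModuleStruct

lemma paschke_inner_formula {A : Type} [Ring A] [StarRing A] [Algebra ℂ A]
    {B : Type} [CStarAlgebra B]
    {X : Type} [NormedAddCommGroup X] [Module ℂ X] [CompleteSpace X]
    (M : HilbertModuleStruct B X) {φ : A → B} {σ : A → X → X} {e : X}
    (h : IsPaschkeDilation M φ σ e) (a a' : A) (b b' : B) :
    M.inner (σ a (M.smulR e b)) (σ a' (M.smulR e b'))
      = star b' * (star (φ (star a * a')) * b) := by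
  obtain ⟨-, -, -, hsm, -, -, hmul, -, hadj, hphi, -⟩ := h
  rw [hadj, ← hmul, hsm, M.inner_smulR_right, M.inner_smulR_left,
    M.inner_star (y := σ (star a * a') e), ← hphi]

theorem paschke_dilation_unique
    (A : Type) [CStarAlgebra A] (B : Type) [CStarAlgebra B]
    (φ : A → B) (hφ : IsCPMapCStar A B φ)
    (X₁ : Type) [NormedAddCommGroup X₁] [Module ℂ X₁] [CompleteSpace X₁]
    (M₁ : HilbertModuleStruct B X₁) (σ₁ : A → X₁ → X₁) (e₁ : X₁)
    (h₁ : IsPaschkeDilation M₁ φ σ₁ e₁)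
    (X₂ : Type) [NormedAddCommGroup X₂] [Module ℂ X₂] [CompleteSpace X₂]
    (M₂ : HilbertModuleStruct B X₂) (σ₂ : A → X₂ → X₂) (e₂ : X₂)
    (h₂ : IsPaschkeDilation M₂ φ σ₂ e₂) :
    ∃ W : X₁ ≃ₗ[ℂ] X₂,
      (∀ x y : X₁, M₂.inner (W x) (W y) = M₁.inner x y) ∧
      (∀ (x : X₁) (b : B), W (M₁.smulR x b) = M₂.smulR (W x) b) ∧
      W e₁ = e₂ ∧
      ∀ (a : A) (x : X₁), W (σ₁ a x) = σ₂ a (W x) := by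
  classical
  obtain ⟨h₁cont, h₁add, h₁smulC, h₁smulR, h₁addA, h₁smulA, h₁mul, h₁one, h₁adj, h₁phi, h₁dense⟩ := h₁
  obtain ⟨h₂cont, h₂add, h₂smulC, h₂smulR, h₂addA, h₂smulA, h₂mul, h₂one, h₂adj, h₂phi, h₂dense⟩ := h₂
  have h₁' : IsPaschkeDilation M₁ φ σ₁ e₁ :=
    ⟨h₁cont, h₁add, h₁smulC, h₁smulR, h₁addA, h₁smulA, h₁mul, h₁one, h₁adj, h₁phi, h₁dense⟩
  have h₂' : IsPaschkeDilation M₂ φ σ₂ e₂ :=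
    ⟨h₂cont, h₂add, h₂smulC, h₂smulR, h₂addA, h₂smulA, h₂mul, h₂one, h₂adj, h₂phi, h₂dense⟩
  haveI := M₁.continuousConstSMul
  haveI := M₂.continuousConstSMul
  set S : Set (X₁ × X₂) :=
    {p | ∃ (a : A) (b : B), p = (σ₁ a (M₁.smulR e₁ b), σ₂ a (M₂.smulR e₂ b))} with hS
  set G : Submodule ℂ (X₁ × X₂) := Submodule.span ℂ S with hGdef
  set Gc : Submodule ℂ (X₁ × X₂) := G.topologicalClosure with hGcdef
  have hGcC : (Gc : Set (X₁ × X₂)) = closure (G : Set (X₁ × X₂)) :=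
    Submodule.topologicalClosure_coe G
  -- inner products agree on S
  have hinnerS : ∀ p ∈ S, ∀ q ∈ S, M₁.inner p.1 q.1 = M₂.inner p.2 q.2 := by
    rintro p ⟨a, b, rfl⟩ q ⟨a', b', rfl⟩
    rw [paschke_inner_formula M₁ h₁' a a' b b', paschke_inner_formula M₂ h₂' a a' b b']
  -- inner products agree on G
  have hinnerG : ∀ p ∈ G, ∀ q ∈ G, M₁.inner p.1 q.1 = M₂.inner p.2 q.2 := by
    intro p hp
    induction hp using Submodule.span_induction with
    | mem p hpS =>
      intro q hq
      induction hq using Submodule.span_induction with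
      | mem q hqS => exact hinnerS p hpS q hqS
      | zero => simp [M₁.inner_zero_right, M₂.inner_zero_right]
      | add q r _ _ hq hr => simp [Prod.fst_add, Prod.snd_add,
          M₁.inner_add_right, M₂.inner_add_right, hq, hr]
      | smul c q _ hq => simp [Prod.smul_fst, Prod.smul_snd,
          M₁.inner_smulC_right, M₂.inner_smulC_right, hq]
    | zero => intro q hq; simp [M₁.inner_zero_left, M₂.inner_zero_left]
    | add p r _ _ hp hr => intro q hq; simp [Prod.fst_add, Prod.snd_add,
        M₁.inner_add_left, M₂.inner_add_left, hp q hq, hr q hq]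
    | smul c p _ hp => intro q hq; simp [Prod.smul_fst, Prod.smul_snd,
        M₁.inner_smulC_left, M₂.inner_smulC_left, hp q hq]
  -- inner products agree on the closure
  have hinnerGc : ∀ p ∈ Gc, ∀ q ∈ Gc, M₁.inner p.1 q.1 = M₂.inner p.2 q.2 := by
    set K : Set ((X₁ × X₂) × (X₁ × X₂)) :=
      {r | M₁.inner r.1.1 r.2.1 = M₂.inner r.1.2 r.2.2} with hK
    have hKc : IsClosed K := by
      apply isClosed_eq
      · exact M₁.continuous_inner.comp
          ((continuous_fst.comp continuous_fst).prodMk (continuous_fst.comp continuous_snd))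
      · exact M₂.continuous_inner.comp
          ((continuous_snd.comp continuous_fst).prodMk (continuous_snd.comp continuous_snd))
    have hsub : (G : Set (X₁ × X₂)) ×ˢ (G : Set (X₁ × X₂)) ⊆ K := by
      rintro ⟨p, q⟩ ⟨hp, hq⟩
      exact hinnerG p hp q hq
    intro p hp q hq
    have hmem : (p, q) ∈ closure ((G : Set (X₁ × X₂)) ×ˢ (G : Set (X₁ × X₂))) := by
      rw [closure_prod_eq]
      exact ⟨by rw [← hGcC]; exact hp, by rw [← hGcC]; exact hq⟩
    exact closure_minimal hsub hKc hmem
  -- norms agree on the closure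
  have hnormGc : ∀ p ∈ Gc, ‖p.1‖ = ‖p.2‖ := by
    intro p hp
    have := hinnerGc p hp p hp
    rw [M₁.norm_eq, M₂.norm_eq, this]
  haveI : CompleteSpace Gc := by
    rw [hGcdef]
    exact (Submodule.isClosed_topologicalClosure G).completeSpace_coe
  -- the two coordinate projections restricted to Gc
  set j₁ : Gc →ₗ[ℂ] X₁ := (LinearMap.fst ℂ X₁ X₂).comp Gc.subtype with hj₁def
  set j₂ : Gc →ₗ[ℂ] X₂ := (LinearMap.snd ℂ X₁ X₂).comp Gc.subtype with hj₂def
  have hj₁norm : ∀ p : Gc, ‖j₁ p‖ = ‖p‖ := by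
    intro p
    have h := hnormGc p.1 p.2
    show ‖(p : X₁ × X₂).1‖ = ‖(p : X₁ × X₂)‖
    rw [Prod.norm_def, ← h, max_self]
  have hj₂norm : ∀ p : Gc, ‖j₂ p‖ = ‖p‖ := by
    intro p
    have h := hnormGc p.1 p.2
    show ‖(p : X₁ × X₂).2‖ = ‖(p : X₁ × X₂)‖
    rw [Prod.norm_def, h, max_self]
  have hj₁iso : Isometry j₁ := AddMonoidHomClass.isometry_of_norm j₁ hj₁norm
  have hj₂iso : Isometry j₂ := AddMonoidHomClass.isometry_of_norm j₂ hj₂norm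
  -- surjectivity of the projections
  have hsurj : ∀ {Y : Type} [NormedAddCommGroup Y] [Module ℂ Y] [CompleteSpace Y], True := by
    intro _ _ _ _; trivial
  have hj₁surj : Function.Surjective j₁ := by
    have hclosed : IsClosed (Set.range j₁) := hj₁iso.isClosedEmbedding.isClosed_range
    have hspan : (Submodule.span ℂ {x : X₁ | ∃ (a : A) (b : B), σ₁ a (M₁.smulR e₁ b) = x} :
        Set X₁) ⊆ Set.range j₁ := by
      have hle : Submodule.span ℂ {x : X₁ | ∃ (a : A) (b : B), σ₁ a (M₁.smulR e₁ b) = x}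
          ≤ LinearMap.range j₁ := by
        rw [Submodule.span_le]
        rintro x ⟨a, b, rfl⟩
        have hmem : (σ₁ a (M₁.smulR e₁ b), σ₂ a (M₂.smulR e₂ b)) ∈ Gc := by
          apply Submodule.le_topologicalClosure
          exact Submodule.subset_span ⟨a, b, rfl⟩
        exact ⟨⟨_, hmem⟩, rfl⟩
      intro x hx
      have := hle hx
      rwa [LinearMap.mem_range] at this
    intro x
    have : x ∈ closure (Submodule.span ℂ
        {x : X₁ | ∃ (a : A) (b : B), σ₁ a (M₁.smulR e₁ b) = x} : Set X₁) := by
      rw [h₁dense.closure_eq]; trivial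
    exact closure_minimal hspan hclosed this
  have hj₂surj : Function.Surjective j₂ := by
    have hclosed : IsClosed (Set.range j₂) := hj₂iso.isClosedEmbedding.isClosed_range
    have hspan : (Submodule.span ℂ {x : X₂ | ∃ (a : A) (b : B), σ₂ a (M₂.smulR e₂ b) = x} :
        Set X₂) ⊆ Set.range j₂ := by
      have hle : Submodule.span ℂ {x : X₂ | ∃ (a : A) (b : B), σ₂ a (M₂.smulR e₂ b) = x}
          ≤ LinearMap.range j₂ := by
        rw [Submodule.span_le]
        rintro x ⟨a, b, rfl⟩
        have hmem : (σ₁ a (M₁.smulR e₁ b), σ₂ a (M₂.smulR e₂ b)) ∈ Gc := by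
          apply Submodule.le_topologicalClosure
          exact Submodule.subset_span ⟨a, b, rfl⟩
        exact ⟨⟨_, hmem⟩, rfl⟩
      intro x hx
      have := hle hx
      rwa [LinearMap.mem_range] at this
    intro x
    have : x ∈ closure (Submodule.span ℂ
        {x : X₂ | ∃ (a : A) (b : B), σ₂ a (M₂.smulR e₂ b) = x} : Set X₂) := by
      rw [h₂dense.closure_eq]; trivial
    exact closure_minimal hspan hclosed this
  set E₁ : Gc ≃ₗ[ℂ] X₁ := LinearEquiv.ofBijective j₁ ⟨hj₁iso.injective, hj₁surj⟩ with hE₁def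
  set E₂ : Gc ≃ₗ[ℂ] X₂ := LinearEquiv.ofBijective j₂ ⟨hj₂iso.injective, hj₂surj⟩ with hE₂def
  have hE₁app : ∀ p : Gc, E₁ p = (p : X₁ × X₂).1 := fun p => rfl
  have hE₂app : ∀ p : Gc, E₂ p = (p : X₁ × X₂).2 := fun p => rfl
  set W : X₁ ≃ₗ[ℂ] X₂ := E₁.symm.trans E₂ with hWdef
  have hWfst : ∀ x : X₁, ((E₁.symm x : Gc) : X₁ × X₂).1 = x := by
    intro x
    have := E₁.apply_symm_apply x
    rwa [hE₁app] at this
  have hWapp : ∀ x : X₁, W x = ((E₁.symm x : Gc) : X₁ × X₂).2 := fun x => rfl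
  -- stability of Gc under right multiplication
  have hTstabG : ∀ b : B, ∀ p ∈ G, (M₁.smulR p.1 b, M₂.smulR p.2 b) ∈ G := by
    intro b p hp
    induction hp using Submodule.span_induction with
    | mem p hpS =>
      obtain ⟨a, b', rfl⟩ := hpS
      apply Submodule.subset_span
      refine ⟨a, b' * b, ?_⟩
      simp only
      rw [← M₁.smulR_mul, ← M₂.smulR_mul, ← h₁smulR, ← h₂smulR]
    | zero =>
      have z1 : M₁.smulR (0:X₁) b = 0 := by
        have := M₁.smulC_smulR 0 0 b; simpa using this
      have z2 : M₂.smulR (0:X₂) b = 0 := by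
        have := M₂.smulC_smulR 0 0 b; simpa using this
      simp [z1, z2]
      exact G.zero_mem
    | add p q _ _ hp hq =>
      have : (M₁.smulR (p + q).1 b, M₂.smulR (p + q).2 b)
          = (M₁.smulR p.1 b, M₂.smulR p.2 b) + (M₁.smulR q.1 b, M₂.smulR q.2 b) := by
        simp [Prod.fst_add, Prod.snd_add, M₁.add_smulR, M₂.add_smulR, Prod.ext_iff]
      rw [this]; exact G.add_mem hp hq
    | smul c p _ hp =>
      have : (M₁.smulR (c • p).1 b, M₂.smulR (c • p).2 b)
          = c • (M₁.smulR p.1 b, M₂.smulR p.2 b) := by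
        simp [Prod.smul_fst, Prod.smul_snd, M₁.smulC_smulR, M₂.smulC_smulR, Prod.ext_iff]
      rw [this]; exact G.smul_mem c hp
  have hTstab : ∀ b : B, ∀ p ∈ Gc, (M₁.smulR p.1 b, M₂.smulR p.2 b) ∈ Gc := by
    intro b p hp
    have hcont : Continuous (fun p : X₁ × X₂ => (M₁.smulR p.1 b, M₂.smulR p.2 b)) := by
      exact ((M₁.continuous_smulRL b).comp continuous_fst).prodMk
        ((M₂.continuous_smulRL b).comp continuous_snd)
    have hp' : p ∈ closure (G : Set (X₁ × X₂)) := by rw [← hGcC]; exact hp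
    have h1 : (M₁.smulR p.1 b, M₂.smulR p.2 b)
        ∈ (fun p : X₁ × X₂ => (M₁.smulR p.1 b, M₂.smulR p.2 b)) '' closure (G : Set (X₁ × X₂)) :=
      ⟨p, hp', rfl⟩
    have h2 := image_closure_subset_closure_image hcont h1
    have h3 : (fun p : X₁ × X₂ => (M₁.smulR p.1 b, M₂.smulR p.2 b)) '' (G : Set (X₁ × X₂))
        ⊆ (G : Set (X₁ × X₂)) := by
      rintro _ ⟨q, hq, rfl⟩
      exact hTstabG b q hq
    have h4 := closure_mono h3 h2
    rw [← hGcC] at h4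
    exact h4
  -- stability of Gc under the representations
  have hUstabG : ∀ a : A, ∀ p ∈ G, (σ₁ a p.1, σ₂ a p.2) ∈ G := by
    intro a p hp
    induction hp using Submodule.span_induction with
    | mem p hpS =>
      obtain ⟨a', b, rfl⟩ := hpS
      apply Submodule.subset_span
      refine ⟨a * a', b, ?_⟩
      simp only
      rw [h₁mul, h₂mul]
    | zero =>
      have z1 : σ₁ a (0:X₁) = 0 := by
        have := h₁smulC a 0 0; simpa using this
      have z2 : σ₂ a (0:X₂) = 0 := by
        have := h₂smulC a 0 0; simpa using this
      simp [z1, z2]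
      exact G.zero_mem
    | add p q _ _ hp hq =>
      have : (σ₁ a (p + q).1, σ₂ a (p + q).2)
          = (σ₁ a p.1, σ₂ a p.2) + (σ₁ a q.1, σ₂ a q.2) := by
        simp [Prod.fst_add, Prod.snd_add, h₁add, h₂add, Prod.ext_iff]
      rw [this]; exact G.add_mem hp hq
    | smul c p _ hp =>
      have : (σ₁ a (c • p).1, σ₂ a (c • p).2) = c • (σ₁ a p.1, σ₂ a p.2) := by
        simp [Prod.smul_fst, Prod.smul_snd, h₁smulC, h₂smulC, Prod.ext_iff]
      rw [this]; exact G.smul_mem c hp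
  have hUstab : ∀ a : A, ∀ p ∈ Gc, (σ₁ a p.1, σ₂ a p.2) ∈ Gc := by
    intro a p hp
    have hcont : Continuous (fun p : X₁ × X₂ => (σ₁ a p.1, σ₂ a p.2)) :=
      ((h₁cont a).comp continuous_fst).prodMk ((h₂cont a).comp continuous_snd)
    have hp' : p ∈ closure (G : Set (X₁ × X₂)) := by rw [← hGcC]; exact hp
    have h1 : (σ₁ a p.1, σ₂ a p.2)
        ∈ (fun p : X₁ × X₂ => (σ₁ a p.1, σ₂ a p.2)) '' closure (G : Set (X₁ × X₂)) :=
      ⟨p, hp', rfl⟩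
    have h2 := image_closure_subset_closure_image hcont h1
    have h3 : (fun p : X₁ × X₂ => (σ₁ a p.1, σ₂ a p.2)) '' (G : Set (X₁ × X₂))
        ⊆ (G : Set (X₁ × X₂)) := by
      rintro _ ⟨q, hq, rfl⟩
      exact hUstabG a q hq
    have h4 := closure_mono h3 h2
    rw [← hGcC] at h4
    exact h4
  refine ⟨W, ?_, ?_, ?_, ?_⟩
  · -- inner products
    intro x y
    have hx := (E₁.symm x).2
    have hy := (E₁.symm y).2
    have := hinnerGc _ hx _ hy
    rw [hWfst x, hWfst y] at this
    rw [hWapp x, hWapp y, ← this]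
  · -- right multiplication
    intro x b
    set p : Gc := E₁.symm x with hpdef
    have hmem : (M₁.smulR (p : X₁ × X₂).1 b, M₂.smulR (p : X₁ × X₂).2 b) ∈ Gc :=
      hTstab b (p : X₁ × X₂) p.2
    set g : Gc := ⟨(M₁.smulR (p : X₁ × X₂).1 b, M₂.smulR (p : X₁ × X₂).2 b), hmem⟩ with hgdef
    have hE₁g : E₁ g = M₁.smulR x b := by
      rw [hE₁app]
      show M₁.smulR (p : X₁ × X₂).1 b = M₁.smulR x b
      rw [hpdef, hWfst x]
    have hsymm : E₁.symm (M₁.smulR x b) = g := by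
      rw [← hE₁g, E₁.symm_apply_apply]
    show E₂ (E₁.symm (M₁.smulR x b)) = M₂.smulR (W x) b
    rw [hsymm, hE₂app]
    show M₂.smulR (p : X₁ × X₂).2 b = M₂.smulR (W x) b
    rw [hWapp x]
  · -- W e₁ = e₂
    have hmemS : (e₁, e₂) ∈ S := by
      refine ⟨1, 1, ?_⟩
      rw [M₁.smulR_one, M₂.smulR_one, h₁one, h₂one]
    have hmem : (e₁, e₂) ∈ Gc :=
      Submodule.le_topologicalClosure G (Submodule.subset_span hmemS)
    set g : Gc := ⟨(e₁, e₂), hmem⟩ with hgdef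
    have hE₁g : E₁ g = e₁ := rfl
    have hsymm : E₁.symm e₁ = g := by rw [← hE₁g, E₁.symm_apply_apply]
    show E₂ (E₁.symm e₁) = e₂
    rw [hsymm]
    rfl
  · -- intertwining
    intro a x
    set p : Gc := E₁.symm x with hpdef
    have hmem : (σ₁ a (p : X₁ × X₂).1, σ₂ a (p : X₁ × X₂).2) ∈ Gc :=
      hUstab a (p : X₁ × X₂) p.2
    set g : Gc := ⟨(σ₁ a (p : X₁ × X₂).1, σ₂ a (p : X₁ × X₂).2), hmem⟩ with hgdef
    have hE₁g : E₁ g = σ₁ a x := by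
      rw [hE₁app]
      show σ₁ a (p : X₁ × X₂).1 = σ₁ a x
      rw [hpdef, hWfst x]
    have hsymm : E₁.symm (σ₁ a x) = g := by
      rw [← hE₁g, E₁.symm_apply_apply]
    show E₂ (E₁.symm (σ₁ a x)) = σ₂ a (W x)
    rw [hsymm, hE₂app]
    show σ₂ a (p : X₁ × X₂).2 = σ₂ a (W x)
    rw [hWapp x]
end
end

section
/- Let A be a unital separable C*-algebra, H a separable Hilbert space, G a group acting on A by τ : G → Aut(A), and let φ : A → B(H) be a G-invariant UCP map with Paschke dilation (X, σ, e). Then there exists a representation W_φ of G by Hilbert B(H)-module isomorphisms of X (unitary adjointable operators) such that W_φ(g)e = e and W_φ(g) σ(a) W_φ(g)* = σ(τ_g(a)) for all g ∈ G and a ∈ A. -/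
/-!
STATEMENT 4: For a `G`-invariant UCP map `φ : A → B(H)` with Paschke dilation
`(X, σ, e)`, there exists a representation `W_φ` of `G` by Hilbert `B(H)`-module
isomorphisms of `X` such that `W_φ(g) e = e` and `W_φ(g) σ(a) W_φ(g)* = σ(τ_g(a))`
for all `g ∈ G` and `a ∈ A`.
-/

open scoped ComplexOrder ComplexInnerProductSpace

noncomputable section

/-- A map `φ : A → B(H)` is completely positive. -/
def IsCPMap (A : Type) [Ring A] [StarRing A] [Algebra ℂ A]
    (H : Type) [NormedAddCommGroup H] [InnerProductSpace ℂ H] [CompleteSpace H]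
    (φ : A → (H →L[ℂ] H)) : Prop :=
  (∀ x y, φ (x + y) = φ x + φ y) ∧
  (∀ (c : ℂ) (x : A), φ (c • x) = c • φ x) ∧
  ∀ (n : ℕ) (a : Fin n → A) (h : Fin n → H),
    0 ≤ ∑ i, ∑ j, ⟪h i, (φ (star (a i) * a j)) (h j)⟫

/-- A unital completely positive map. -/
def IsUCPMap (A : Type) [Ring A] [StarRing A] [Algebra ℂ A]
    (H : Type) [NormedAddCommGroup H] [InnerProductSpace ℂ H] [CompleteSpace H]
    (φ : A → (H →L[ℂ] H)) : Prop :=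
  IsCPMap A H φ ∧ φ 1 = 1

namespace PaschkeAux

private lemma sq_le_imp {a b : ℝ} (ha : 0 ≤ a) (hb : 0 ≤ b) (h : a ^ 2 ≤ b ^ 2) : a ≤ b := by
  nlinarith

/-- Cauchy–Schwarz for a positive semidefinite sesquilinear form over `ℂ`. -/
private lemma scalar_cs {Y : Type} [AddCommGroup Y] [Module ℂ Y] (q : Y → Y → ℂ)
    (hadd : ∀ x y z, q (x + y) z = q x z + q y z)
    (hsmul : ∀ (c : ℂ) (x y : Y), q (c • x) y = c * q x y)
    (hconj : ∀ x y, q x y = starRingEnd ℂ (q y x))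
    (hpos : ∀ x, 0 ≤ (q x x).re)
    (x y : Y) : ‖q x y‖ ^ 2 ≤ (q x x).re * (q y y).re := by
  have hreal : ∀ z : Y, q z z = ((q z z).re : ℂ) := by
    intro z
    exact (Complex.conj_eq_iff_re.mp (hconj z z).symm).symm
  have haddr : ∀ x y z : Y, q x (y + z) = q x y + q x z := by
    intro x y z
    rw [hconj x (y + z), hadd, map_add, ← hconj, ← hconj]
  have hsmulr : ∀ (c : ℂ) (x y : Y), q x (c • y) = starRingEnd ℂ c * q x y := by
    intro c x y
    rw [hconj x (c • y), hsmul, map_mul, ← hconj]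
  set a := (q x x).re with ha
  set b := q x y with hb
  set d := (q y y).re with hd
  have hba : q y x = starRingEnd ℂ b := by rw [hb, ← hconj]
  have key : ∀ t : ℝ, 0 ≤ a - 2 * t * ‖b‖ ^ 2 + t ^ 2 * ‖b‖ ^ 2 * d := by
    intro t
    set c : ℂ := -(t : ℂ) * b with hc
    have hexp : q (x + c • y) (x + c • y)
        = q x x + starRingEnd ℂ c * b + c * starRingEnd ℂ b + (c * starRingEnd ℂ c) * q y y := by
      rw [hadd, hsmul, haddr, haddr, hsmulr, hsmulr, ← hb, hba]
      ring
    have h0 := hpos (x + c • y)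
    rw [hexp] at h0
    have hcc : starRingEnd ℂ c = -(t : ℂ) * starRingEnd ℂ b := by
      rw [hc, map_mul, map_neg, Complex.conj_ofReal]
    have hbb : starRingEnd ℂ b * b = ((‖b‖ ^ 2 : ℝ) : ℂ) := by
      rw [RCLike.conj_mul]; norm_cast
    have hbb' : b * starRingEnd ℂ b = ((‖b‖ ^ 2 : ℝ) : ℂ) := by
      rw [RCLike.mul_conj]; norm_cast
    have e1 : starRingEnd ℂ c * b = ((-t * ‖b‖ ^ 2 : ℝ) : ℂ) := by
      rw [hcc, mul_assoc, hbb]; push_cast; ring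
    have e2 : c * starRingEnd ℂ b = ((-t * ‖b‖ ^ 2 : ℝ) : ℂ) := by
      rw [hc, mul_assoc, hbb']; push_cast; ring
    have e3 : c * starRingEnd ℂ c = ((t ^ 2 * ‖b‖ ^ 2 : ℝ) : ℂ) := by
      rw [hc, hcc]
      have : -(t:ℂ) * b * (-(t:ℂ) * starRingEnd ℂ b) = ((t:ℂ)^2) * (b * starRingEnd ℂ b) := by ring
      rw [this, hbb']; push_cast; ring
    rw [e1, e2, e3, hreal y, ← hd] at h0
    have : (q x x + ((-t * ‖b‖ ^ 2 : ℝ) : ℂ) + ((-t * ‖b‖ ^ 2 : ℝ) : ℂ)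
        + ((t ^ 2 * ‖b‖ ^ 2 : ℝ) : ℂ) * (d : ℂ)).re
        = a - 2 * t * ‖b‖ ^ 2 + t ^ 2 * ‖b‖ ^ 2 * d := by
      simp [Complex.add_re, Complex.ofReal_re, ← ha, ← Complex.ofReal_mul]
      ring
    rw [this] at h0
    exact h0
  have ha0 : 0 ≤ a := hpos x
  have hd0 : 0 ≤ d := hpos y
  have key' : ∀ t : ℝ, 0 ≤ (‖b‖ ^ 2 * d) * (t * t) + (-(2 * ‖b‖ ^ 2)) * t + a := by
    intro t
    nlinarith [key t]
  have hdisc := discrim_le_zero key'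
  rw [discrim] at hdisc
  by_cases hb0 : ‖b‖ = 0
  · rw [hb0]
    simpa using mul_nonneg ha0 hd0
  · have hbpos : 0 < ‖b‖ ^ 2 := by positivity
    nlinarith [hdisc, hbpos]

variable {H : Type} [NormedAddCommGroup H] [InnerProductSpace ℂ H] [CompleteSpace H]
variable {X : Type} [NormedAddCommGroup X] [Module ℂ X] [CompleteSpace X]
variable (M : HilbertModuleStruct (H →L[ℂ] H) X)

lemma inner_zero_left (y : X) : M.inner 0 y = 0 := by
  have h := M.inner_add_left 0 0 y
  rw [add_zero] at h
  exact (left_eq_add.mp h)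

lemma inner_sub_left (x y z : X) : M.inner (x - y) z = M.inner x z - M.inner y z := by
  have h := M.inner_add_left (x - y) y z
  rw [sub_add_cancel] at h
  exact eq_sub_of_add_eq h.symm

lemma norm_sq (x : X) : ‖M.inner x x‖ = ‖x‖ ^ 2 := by
  rw [M.norm_eq, Real.sq_sqrt (norm_nonneg _)]

lemma inner_smulR_right (x y : X) (b : H →L[ℂ] H) :
    M.inner x (M.smulR y b) = star b * M.inner x y := by
  rw [M.inner_star x (M.smulR y b), M.inner_smulR_left, star_mul, ← M.inner_star]

include M in
lemma norm_smulC (c : ℂ) (x : X) : ‖c • x‖ = ‖c‖ * ‖x‖ := by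
  have h0 : M.inner x (c • x) = star c • M.inner x x := by
    rw [M.inner_star x (c • x), M.inner_smulC_left, star_smul, ← M.inner_star]
  have h1 : M.inner (c • x) (c • x) = (c * star c) • M.inner x x := by
    rw [M.inner_smulC_left, h0, smul_smul]
  have h2 : ‖c * star c‖ = ‖c‖ ^ 2 := by
    rw [RCLike.star_def, RCLike.mul_conj, norm_pow, RCLike.norm_ofReal,
      abs_of_nonneg (norm_nonneg c)]
  rw [M.norm_eq, h1, norm_smul, h2, Real.sqrt_mul (sq_nonneg _), Real.sqrt_sq (norm_nonneg _),
    ← M.norm_eq]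

lemma q_self (x : X) (hh : H) :
    ∃ r : ℝ, 0 ≤ r ∧ ⟪hh, (M.inner x x) hh⟫ = (r : ℂ) ∧ r ≤ ‖x‖ ^ 2 * ‖hh‖ ^ 2 := by
  obtain ⟨c, hc⟩ := M.inner_self_pos x
  refine ⟨‖c hh‖ ^ 2, sq_nonneg _, ?_, ?_⟩
  · rw [hc]
    have h1 : (star c * c) hh = ContinuousLinearMap.adjoint c (c hh) := by
      rw [← ContinuousLinearMap.star_eq_adjoint]; rfl
    rw [h1, ContinuousLinearMap.adjoint_inner_right, inner_self_eq_norm_sq_to_K]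
    norm_cast
  · have h1 : ‖c hh‖ ≤ ‖c‖ * ‖hh‖ := c.le_opNorm hh
    have h2 : ‖c‖ * ‖c‖ = ‖x‖ ^ 2 := by
      rw [← CStarRing.norm_star_mul_self, ← hc, norm_sq]
    nlinarith [norm_nonneg (c hh), norm_nonneg c, norm_nonneg hh]

lemma cauchy_schwarz (x y : X) : ‖M.inner x y‖ ≤ ‖x‖ * ‖y‖ := by
  refine ContinuousLinearMap.opNorm_le_bound _ (mul_nonneg (norm_nonneg _) (norm_nonneg _))
    fun hh => ?_
  set Q : X → X → ℂ := fun u v => ⟪hh, (M.inner u v) hh⟫ with hQ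
  have hQadd : ∀ u v w : X, Q (u + v) w = Q u w + Q v w := by
    intro u v w
    simp only [hQ, M.inner_add_left, ContinuousLinearMap.add_apply, inner_add_right]
  have hQsmul : ∀ (c : ℂ) (u v : X), Q (c • u) v = c * Q u v := by
    intro c u v
    simp only [hQ, M.inner_smulC_left, ContinuousLinearMap.smul_apply, inner_smul_right]
  have hQconj : ∀ u v : X, Q u v = starRingEnd ℂ (Q v u) := by
    intro u v
    simp only [hQ]
    rw [M.inner_star u v, ContinuousLinearMap.star_eq_adjoint,
      ContinuousLinearMap.adjoint_inner_right, ← inner_conj_symm]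
  have hQpos : ∀ u : X, 0 ≤ (Q u u).re := by
    intro u
    obtain ⟨r, hr0, hre, _⟩ := q_self M u hh
    have : Q u u = (r : ℂ) := hre
    rw [this, Complex.ofReal_re]; exact hr0
  set T := M.inner x y with hT
  by_cases hT0 : ‖T hh‖ = 0
  · rw [hT0]; positivity
  · have hK : Q (M.smulR y T) x = ((‖T hh‖ ^ 2 : ℝ) : ℂ) := by
      have h1 : M.inner (M.smulR y T) x = star T * T := by
        rw [M.inner_smulR_left, M.inner_star y x, ← hT]
      simp only [hQ]
      rw [h1]
      have h2 : (star T * T) hh = ContinuousLinearMap.adjoint T (T hh) := by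
        rw [← ContinuousLinearMap.star_eq_adjoint]; rfl
      rw [h2, ContinuousLinearMap.adjoint_inner_right, inner_self_eq_norm_sq_to_K]
      norm_cast
    have hdiag : (Q (M.smulR y T) (M.smulR y T)).re ≤ ‖y‖ ^ 2 * ‖T hh‖ ^ 2 := by
      obtain ⟨c, hc⟩ := M.inner_self_pos y
      have h1 : M.inner (M.smulR y T) (M.smulR y T) = star T * (M.inner y y * T) := by
        rw [M.inner_smulR_left, inner_smulR_right, mul_assoc]
      have h2 : Q (M.smulR y T) (M.smulR y T) = ⟪T hh, (M.inner y y) (T hh)⟫ := by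
        simp only [hQ]
        rw [h1]
        have h3 : (star T * (M.inner y y * T)) hh
            = ContinuousLinearMap.adjoint T ((M.inner y y * T) hh) := by
          rw [← ContinuousLinearMap.star_eq_adjoint]; rfl
        rw [h3, ContinuousLinearMap.adjoint_inner_right]; rfl
      have h4 : (star c * c) (T hh) = ContinuousLinearMap.adjoint c (c (T hh)) := by
        rw [← ContinuousLinearMap.star_eq_adjoint]; rfl
      have h5 : (Q (M.smulR y T) (M.smulR y T)).re = ‖c (T hh)‖ ^ 2 := by
        rw [h2, hc, h4, ContinuousLinearMap.adjoint_inner_right, inner_self_eq_norm_sq_to_K]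
        norm_cast
      rw [h5]
      have h6 : ‖c (T hh)‖ ≤ ‖c‖ * ‖T hh‖ := c.le_opNorm _
      have h7 : ‖c‖ * ‖c‖ = ‖y‖ ^ 2 := by
        rw [← CStarRing.norm_star_mul_self, ← hc, norm_sq]
      nlinarith [norm_nonneg (c (T hh)), norm_nonneg c, norm_nonneg (T hh)]
    have hxb : (Q x x).re ≤ ‖x‖ ^ 2 * ‖hh‖ ^ 2 := by
      obtain ⟨r, _, hre, hb⟩ := q_self M x hh
      have : Q x x = (r : ℂ) := hre
      rw [this, Complex.ofReal_re]; exact hb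
    have hcs := scalar_cs Q hQadd hQsmul hQconj hQpos (M.smulR y T) x
    rw [hK] at hcs
    have hKn : ‖((‖T hh‖ ^ 2 : ℝ) : ℂ)‖ = ‖T hh‖ ^ 2 := by
      rw [Complex.norm_of_nonneg (sq_nonneg _)]
    rw [hKn] at hcs
    have hQd0 : 0 ≤ (Q (M.smulR y T) (M.smulR y T)).re := hQpos _
    have hKpos : 0 < ‖T hh‖ ^ 2 := by positivity
    have hfinal : ‖T hh‖ ^ 2 ≤ ‖x‖ ^ 2 * ‖y‖ ^ 2 * ‖hh‖ ^ 2 := by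
      nlinarith [hcs, hdiag, hxb, hQd0, sq_nonneg (‖x‖ * ‖hh‖), norm_nonneg x, norm_nonneg hh,
        norm_nonneg y]
    refine sq_le_imp (norm_nonneg _) (by positivity) ?_
    calc ‖T hh‖ ^ 2 ≤ ‖x‖ ^ 2 * ‖y‖ ^ 2 * ‖hh‖ ^ 2 := hfinal
      _ = (‖x‖ * ‖y‖ * ‖hh‖) ^ 2 := by ring

lemma continuous_inner_left (y : X) : Continuous fun x : X => M.inner x y := by
  refine (LipschitzWith.of_dist_le_mul (K := ‖y‖₊) fun x x' => ?_).continuous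
  rw [dist_eq_norm, dist_eq_norm, ← inner_sub_left]
  calc ‖M.inner (x - x') y‖ ≤ ‖x - x'‖ * ‖y‖ := cauchy_schwarz M _ _
    _ = (‖y‖₊ : ℝ) * ‖x - x'‖ := by rw [coe_nnnorm]; ring

lemma continuous_inner_right (x : X) : Continuous fun y : X => M.inner x y := by
  have h : (fun y : X => M.inner x y) = fun y => star (M.inner y x) :=
    funext fun y => M.inner_star x y
  rw [h]
  exact continuous_star.comp (continuous_inner_left M x)

/-- Right multiplication by `b` as a continuous linear map. -/
def smulRL (b : H →L[ℂ] H) : X →L[ℂ] X :=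
  LinearMap.mkContinuous
    { toFun := fun x => M.smulR x b
      map_add' := fun x y => M.add_smulR x y b
      map_smul' := fun c x => M.smulC_smulR c x b }
    ‖b‖
    (fun x => by
      have h1 : M.inner (M.smulR x b) (M.smulR x b) = star b * M.inner x x * b := by
        rw [M.inner_smulR_left, inner_smulR_right]
      have h2 : ‖M.smulR x b‖ ^ 2 = ‖star b * M.inner x x * b‖ := by
        rw [← h1, norm_sq]
      have h3 : ‖star b * M.inner x x * b‖ ≤ ‖b‖ * ‖x‖ ^ 2 * ‖b‖ := by
        calc ‖star b * M.inner x x * b‖ ≤ ‖star b * M.inner x x‖ * ‖b‖ := norm_mul_le _ _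
          _ ≤ ‖star b‖ * ‖M.inner x x‖ * ‖b‖ :=
            mul_le_mul_of_nonneg_right (norm_mul_le _ _) (norm_nonneg _)
          _ = ‖b‖ * ‖x‖ ^ 2 * ‖b‖ := by rw [norm_star, norm_sq]
      refine sq_le_imp (norm_nonneg _) (by positivity) ?_
      calc ‖M.smulR x b‖ ^ 2 = ‖star b * M.inner x x * b‖ := h2
        _ ≤ ‖b‖ * ‖x‖ ^ 2 * ‖b‖ := h3
        _ = (‖b‖ * ‖x‖) ^ 2 := by ring)

@[simp] lemma smulRL_apply (b : H →L[ℂ] H) (x : X) : smulRL M b x = M.smulR x b := rfl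

/-- `x ↦ ⟨x, z⟩` as a linear map. -/
def innerL (z : X) : X →ₗ[ℂ] (H →L[ℂ] H) where
  toFun := fun x => M.inner x z
  map_add' := fun a b => M.inner_add_left a b z
  map_smul' := fun c x => M.inner_smulC_left c x z

@[simp] lemma innerL_apply (z x : X) : innerL M z x = M.inner x z := rfl

end PaschkeAux

set_option maxHeartbeats 400000 in
theorem exists_module_rep_of_G_invariant_paschke
    (A : Type) [CStarAlgebra A] [TopologicalSpace.SeparableSpace A]
    (H : Type) [NormedAddCommGroup H] [InnerProductSpace ℂ H] [CompleteSpace H]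
    [TopologicalSpace.SeparableSpace H]
    (G : Type) [Group G] (τ : G → A ≃⋆ₐ[ℂ] A)
    (hτ : ∀ (g₁ g₂ : G) (a : A), τ (g₁ * g₂) a = τ g₁ (τ g₂ a))
    (φ : A → (H →L[ℂ] H)) (hφ : IsUCPMap A H φ)
    (hφinv : ∀ (g : G) (a : A), φ (τ g a) = φ a)
    (X : Type) [NormedAddCommGroup X] [Module ℂ X] [CompleteSpace X]
    (M : HilbertModuleStruct (H →L[ℂ] H) X) (σ : A → X → X) (e : X)
    (h : IsPaschkeDilation M φ σ e) :
    ∃ W : G → X → X,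
      (∀ g : G, Function.Bijective (W g)) ∧
      (∀ (g : G) (x y : X), W g (x + y) = W g x + W g y) ∧
      (∀ (g : G) (c : ℂ) (x : X), W g (c • x) = c • W g x) ∧
      (∀ (g : G) (x : X) (b : H →L[ℂ] H), W g (M.smulR x b) = M.smulR (W g x) b) ∧
      (∀ (g : G) (x y : X), M.inner (W g x) (W g y) = M.inner x y) ∧
      (∀ (g₁ g₂ : G) (x : X), W (g₁ * g₂) x = W g₁ (W g₂ x)) ∧
      (∀ g : G, W g e = e) ∧
      (∀ (g : G) (a : A) (x : X), W g (σ a x) = σ (τ g a) (W g x)) := by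
    classical
  obtain ⟨hcont, hadd, hsmulC, hsmulR, haddA, hsmulCA, hmulA, honeA, hadjA, hphiA, hdenseA⟩ := h
  letI : NormedSpace ℂ X :=
    { toModule := inferInstance
      norm_smul_le := fun c x => le_of_eq (PaschkeAux.norm_smulC M c x) }
  set gen : A × (H →L[ℂ] H) → X := fun p => σ p.1 (M.smulR e p.2) with hgen
  set Tm : ((A × (H →L[ℂ] H)) →₀ ℂ) →ₗ[ℂ] X := Finsupp.linearCombination ℂ gen with hTmdef
  set Tg : G → (((A × (H →L[ℂ] H)) →₀ ℂ) →ₗ[ℂ] X) :=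
    fun g => Finsupp.linearCombination ℂ (fun p : A × (H →L[ℂ] H) => gen (τ g p.1, p.2))
    with hTgdef
  have hTm_single : ∀ (p : A × (H →L[ℂ] H)) (c : ℂ), Tm (Finsupp.single p c) = c • gen p := by
    intro p c
    rw [hTmdef]
    simp [Finsupp.linearCombination_single]
  have hTg_single : ∀ (g : G) (p : A × (H →L[ℂ] H)) (c : ℂ),
      Tg g (Finsupp.single p c) = c • gen (τ g p.1, p.2) := by
    intro g p c
    rw [hTgdef]
    simp [Finsupp.linearCombination_single]
  have hspan : Submodule.span ℂ {x : X | ∃ (a : A) (b : H →L[ℂ] H), σ a (M.smulR e b) = x}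
      = LinearMap.range Tm := by
    rw [hTmdef, Finsupp.range_linearCombination]
    congr 1
    ext x
    constructor
    · rintro ⟨a, b, hx⟩; exact ⟨(a, b), hx⟩
    · rintro ⟨p, hx⟩; exact ⟨p.1, p.2, hx⟩
  have hdense' : Dense ((LinearMap.range Tm : Submodule ℂ X) : Set X) := by
    rw [← hspan]; exact hdenseA
  have hgeninner : ∀ p q : A × (H →L[ℂ] H),
      M.inner (gen p) (gen q) = star q.2 * (star (φ (star p.1 * q.1)) * p.2) := by
    intro p q
    show M.inner (σ p.1 (M.smulR e p.2)) (σ q.1 (M.smulR e q.2)) = _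
    rw [hsmulR q.1 e q.2, PaschkeAux.inner_smulR_right, hadjA, ← hmulA,
      M.inner_smulR_left, M.inner_star e, ← hphiA]
  have hgeninv : ∀ (g : G) (p q : A × (H →L[ℂ] H)),
      M.inner (gen (τ g p.1, p.2)) (gen (τ g q.1, q.2)) = M.inner (gen p) (gen q) := by
    intro g p q
    rw [hgeninner, hgeninner]
    show star q.2 * (star (φ (star (τ g p.1) * τ g q.1)) * p.2)
      = star q.2 * (star (φ (star p.1 * q.1)) * p.2)
    have h1 : star (τ g p.1) * τ g q.1 = τ g (star p.1 * q.1) := by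
      rw [map_mul, map_star]
    rw [h1, hφinv]
  have key2 : ∀ (g : G) (p : A × (H →L[ℂ] H)),
      (PaschkeAux.innerL M (gen (τ g p.1, p.2))).comp (Tg g)
        = (PaschkeAux.innerL M (gen p)).comp Tm := by
    intro g p
    apply Finsupp.lhom_ext
    intro q c
    simp only [LinearMap.comp_apply, hTg_single, hTm_single, map_smul,
      PaschkeAux.innerL_apply]
    rw [hgeninv]
  have key : ∀ (g : G) (u v : (A × (H →L[ℂ] H)) →₀ ℂ),
      M.inner (Tg g u) (Tg g v) = M.inner (Tm u) (Tm v) := by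
    intro g u v
    have hmaps : (PaschkeAux.innerL M (Tg g v)).comp (Tg g)
        = (PaschkeAux.innerL M (Tm v)).comp Tm := by
      apply Finsupp.lhom_ext
      intro p c
      have h1 := LinearMap.congr_fun (key2 g p) v
      simp only [LinearMap.comp_apply, PaschkeAux.innerL_apply] at h1
      simp only [LinearMap.comp_apply, hTg_single, hTm_single, map_smul,
        PaschkeAux.innerL_apply]
      congr 1
      rw [M.inner_star (gen (τ g p.1, p.2)) (Tg g v), h1, ← M.inner_star]
    have h2 := LinearMap.congr_fun hmaps u
    simpa only [LinearMap.comp_apply, PaschkeAux.innerL_apply] using h2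
  have hTnorm : ∀ (g : G) (u : (A × (H →L[ℂ] H)) →₀ ℂ), ‖Tg g u‖ = ‖Tm u‖ := by
    intro g u
    rw [M.norm_eq, M.norm_eq, key g u u]
  have hker : ∀ g : G, LinearMap.ker Tm ≤ LinearMap.ker (Tg g) := by
    intro g u hu
    rw [LinearMap.mem_ker] at hu ⊢
    have h1 : ‖Tg g u‖ = 0 := by rw [hTnorm, hu, norm_zero]
    exact norm_eq_zero.mp h1
  set W0 : G → ((LinearMap.range Tm : Submodule ℂ _) →ₗ[ℂ] X) := fun g =>
    ((LinearMap.ker Tm).liftQ (Tg g) (hker g)).comp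
      (LinearMap.quotKerEquivRange Tm).symm.toLinearMap with hW0def
  have hW0app : ∀ (g : G) (u : (A × (H →L[ℂ] H)) →₀ ℂ),
      W0 g ⟨Tm u, LinearMap.mem_range_self Tm u⟩ = Tg g u := by
    intro g u
    simp only [hW0def, LinearMap.comp_apply, LinearEquiv.coe_coe]
    rw [LinearMap.quotKerEquivRange_symm_apply_image, Submodule.mkQ_apply,
      Submodule.liftQ_apply]
  have hW0norm : ∀ (g : G) (s : (LinearMap.range Tm : Submodule ℂ _)), ‖W0 g s‖ = ‖s‖ := by
    intro g s
    obtain ⟨u, hu⟩ := LinearMap.mem_range.mp s.2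
    have hs : s = ⟨Tm u, LinearMap.mem_range_self Tm u⟩ := Subtype.ext hu.symm
    rw [hs, hW0app, hTnorm]
    rfl
  set W0C : G → ((LinearMap.range Tm : Submodule ℂ _) →L[ℂ] X) := fun g =>
    LinearMap.mkContinuous (W0 g) 1 (fun s => le_of_eq (by rw [hW0norm, one_mul]))
    with hW0Cdef
  have hW0Capp : ∀ (g : G) (s : (LinearMap.range Tm : Submodule ℂ _)), W0C g s = W0 g s := by
    intro g s
    simp only [hW0Cdef, LinearMap.mkContinuous_apply]
  set j : (LinearMap.range Tm : Submodule ℂ _) →L[ℂ] X := (LinearMap.range Tm).subtypeL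
    with hjdef
  have hjui : IsUniformInducing ⇑j :=
    isUniformEmbedding_subtype_val.isUniformInducing
  have hjdr : DenseRange ⇑j := by
    have hrange : Set.range ⇑j = ((LinearMap.range Tm : Submodule ℂ X) : Set X) := by
      ext x
      constructor
      · rintro ⟨s, rfl⟩
        exact s.2
      · intro hx
        exact ⟨⟨x, hx⟩, rfl⟩
    rw [DenseRange, hrange]
    exact hdense'
  set W : G → (X →L[ℂ] X) := fun g => (W0C g).extend j with hWdef
  have hWTm : ∀ (g : G) (u : (A × (H →L[ℂ] H)) →₀ ℂ), W g (Tm u) = Tg g u := by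
    intro g u
    have h1 := ContinuousLinearMap.extend_eq (f := W0C g) (e := j) hjdr hjui
      (⟨Tm u, LinearMap.mem_range_self Tm u⟩ : (LinearMap.range Tm : Submodule ℂ _))
    have h2 : W g (Tm u) = W0C g ⟨Tm u, LinearMap.mem_range_self Tm u⟩ := by
      rw [hWdef]
      exact h1
    rw [h2, hW0Capp, hW0app]
  have hTmgen : ∀ p : A × (H →L[ℂ] H), Tm (Finsupp.single p 1) = gen p := by
    intro p
    rw [hTm_single, one_smul]
  have hWgen : ∀ (g : G) (p : A × (H →L[ℂ] H)), W g (gen p) = gen (τ g p.1, p.2) := by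
    intro g p
    rw [← hTmgen p, hWTm, hTg_single, one_smul]
  have hext : ∀ f₁ f₂ : X →L[ℂ] X,
      (∀ p : A × (H →L[ℂ] H), f₁ (gen p) = f₂ (gen p)) → f₁ = f₂ := by
    intro f₁ f₂ hfg
    have h1 : Set.EqOn ⇑f₁ ⇑f₂
        {x : X | ∃ (a : A) (b : H →L[ℂ] H), σ a (M.smulR e b) = x} := by
      rintro x ⟨a, b, rfl⟩
      exact hfg (a, b)
    have h2 : Set.EqOn ⇑f₁ ⇑f₂
        ((Submodule.span ℂ {x : X | ∃ (a : A) (b : H →L[ℂ] H), σ a (M.smulR e b) = x} :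
          Submodule ℂ X) : Set X) :=
      LinearMap.eqOn_span' h1
    exact ContinuousLinearMap.ext fun x =>
      congrFun (Continuous.ext_on hdenseA f₁.continuous f₂.continuous h2) x
  have hτone : ∀ a : A, τ 1 a = a := by
    intro a
    have h1 : τ 1 a = τ 1 (τ 1 a) := by
      have h2 := hτ 1 1 a
      rwa [mul_one] at h2
    exact (τ 1).injective h1.symm
  have hWmul : ∀ g₁ g₂ : G, W (g₁ * g₂) = (W g₁).comp (W g₂) := by
    intro g₁ g₂
    apply hext
    intro p
    rw [ContinuousLinearMap.comp_apply, hWgen, hWgen, hWgen]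
    show gen (τ (g₁ * g₂) p.1, p.2) = gen (τ g₁ (τ g₂ p.1), p.2)
    rw [hτ]
  have hWone : W 1 = ContinuousLinearMap.id ℂ X := by
    apply hext
    intro p
    rw [hWgen]
    show gen (τ 1 p.1, p.2) = gen p
    rw [hτone]
  have hWbij : ∀ g : G, Function.Bijective ⇑(W g) := by
    intro g
    have h1 : ∀ x : X, W g⁻¹ (W g x) = x := by
      intro x
      rw [← ContinuousLinearMap.comp_apply, ← hWmul, inv_mul_cancel, hWone]
      rfl
    have h2 : ∀ x : X, W g (W g⁻¹ x) = x := by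
      intro x
      rw [← ContinuousLinearMap.comp_apply, ← hWmul, mul_inv_cancel, hWone]
      rfl
    exact Function.bijective_iff_has_inverse.mpr ⟨⇑(W g⁻¹), h1, h2⟩
  have hsmgen : ∀ (b : H →L[ℂ] H) (q : A × (H →L[ℂ] H)),
      M.smulR (gen q) b = gen (q.1, q.2 * b) := by
    intro b q
    show M.smulR (σ q.1 (M.smulR e q.2)) b = σ q.1 (M.smulR e (q.2 * b))
    rw [← M.smulR_mul, ← hsmulR]
  have hWsmulR : ∀ (g : G) (b : H →L[ℂ] H),
      (W g).comp (PaschkeAux.smulRL M b) = (PaschkeAux.smulRL M b).comp (W g) := by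
    intro g b
    apply hext
    intro p
    simp only [ContinuousLinearMap.comp_apply, PaschkeAux.smulRL_apply]
    rw [hsmgen, hWgen, hWgen, hsmgen]
  set σL : A → (X →L[ℂ] X) := fun a =>
    ⟨{ toFun := σ a, map_add' := hadd a, map_smul' := hsmulC a }, hcont a⟩ with hσLdef
  have hσLapply : ∀ (a : A) (x : X), σL a x = σ a x := fun a x => rfl
  have hσgen : ∀ (a : A) (q : A × (H →L[ℂ] H)), σ a (gen q) = gen (a * q.1, q.2) := by
    intro a q
    show σ a (σ q.1 (M.smulR e q.2)) = σ (a * q.1) (M.smulR e q.2)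
    rw [hmulA]
  have hWsigma : ∀ (g : G) (a : A), (W g).comp (σL a) = (σL (τ g a)).comp (W g) := by
    intro g a
    apply hext
    intro p
    simp only [ContinuousLinearMap.comp_apply, hσLapply]
    rw [hσgen, hWgen, hWgen, hσgen]
    show gen (τ g (a * p.1), p.2) = gen (τ g a * τ g p.1, p.2)
    rw [map_mul]
  have hWe : ∀ g : G, W g e = e := by
    intro g
    have h1 : gen (1, 1) = e := by
      show σ 1 (M.smulR e 1) = e
      rw [M.smulR_one, honeA]
    have h2 := hWgen g (1, 1)
    rw [h1] at h2
    calc W g e = gen (τ g 1, 1) := h2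
      _ = gen (1, 1) := by rw [map_one]
      _ = e := h1
  have hWinner : ∀ (g : G) (x y : X), M.inner (W g x) (W g y) = M.inner x y := by
    intro g
    have hstep1 : ∀ u v : (A × (H →L[ℂ] H)) →₀ ℂ,
        M.inner (W g (Tm u)) (W g (Tm v)) = M.inner (Tm u) (Tm v) := by
      intro u v
      rw [hWTm, hWTm, key]
    have hstep2 : ∀ (v : (A × (H →L[ℂ] H)) →₀ ℂ) (x : X),
        M.inner (W g x) (W g (Tm v)) = M.inner x (Tm v) := by
      intro v
      have hc1 : Continuous fun x : X => M.inner (W g x) (W g (Tm v)) :=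
        (PaschkeAux.continuous_inner_left M _).comp (W g).continuous
      have hc2 : Continuous fun x : X => M.inner x (Tm v) :=
        PaschkeAux.continuous_inner_left M _
      have heq : Set.EqOn (fun x : X => M.inner (W g x) (W g (Tm v)))
          (fun x : X => M.inner x (Tm v))
          ((LinearMap.range Tm : Submodule ℂ X) : Set X) := by
        rintro x hx
        obtain ⟨u, rfl⟩ := LinearMap.mem_range.mp hx
        exact hstep1 u v
      have h3 := Continuous.ext_on hdense' hc1 hc2 heq
      exact fun x => congrFun h3 x
    intro x y
    have hc1 : Continuous fun y : X => M.inner (W g x) (W g y) :=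
      (PaschkeAux.continuous_inner_right M _).comp (W g).continuous
    have hc2 : Continuous fun y : X => M.inner x y :=
      PaschkeAux.continuous_inner_right M x
    have heq : Set.EqOn (fun y : X => M.inner (W g x) (W g y))
        (fun y : X => M.inner x y)
        ((LinearMap.range Tm : Submodule ℂ X) : Set X) := by
      rintro y hy
      obtain ⟨v, rfl⟩ := LinearMap.mem_range.mp hy
      exact hstep2 v x
    have h3 := Continuous.ext_on hdense' hc1 hc2 heq
    exact congrFun h3 y
  refine ⟨fun g => ⇑(W g), hWbij, ?_, ?_, ?_, hWinner, ?_, hWe, ?_⟩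
  · intro g x y
    exact map_add (W g) x y
  · intro g c x
    exact map_smul (W g) c x
  · intro g x b
    have h1 := ContinuousLinearMap.ext_iff.mp (hWsmulR g b) x
    simpa only [ContinuousLinearMap.comp_apply, PaschkeAux.smulRL_apply] using h1
  · intro g₁ g₂ x
    have h1 := ContinuousLinearMap.ext_iff.mp (hWmul g₁ g₂) x
    simpa only [ContinuousLinearMap.comp_apply] using h1
  · intro g a x
    have h1 := ContinuousLinearMap.ext_iff.mp (hWsigma g a) x
    simpa only [ContinuousLinearMap.comp_apply, hσLapply] using h1
end
end

section
/- Let A be a unital separable C*-algebra, H a separable Hilbert space, G a group acting on A by τ : G → Aut(A), let φ ∈ UCP_G(A, B(H)), and let μ be a generalized orthogonal measure on UCP(A,B(H)) with barycenter φ. Then μ satisfies ∫ f(φ′) ⟨φ′(τ_{g⁻¹}(ab))h₁, h₂⟩ dμ(φ′) = ∫ f(φ′) ⟨φ′(ab)h₁, h₂⟩ dμ(φ′) for all a, b ∈ A, h₁, h₂ ∈ H, g ∈ G, and f ∈ L^∞(UCP(A,B(H)), μ) if and only if the support of μ is contained in UCP_G(A, B(H)). -/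
/-!
STATEMENT 6: A generalized orthogonal measure `μ` with barycenter
`φ ∈ UCP_G(A, B(H))` satisfies the invariance condition
`∫ f(φ′) ⟪h₁, φ′(τ_{g⁻¹}(ab)) h₂⟫ dμ = ∫ f(φ′) ⟪h₁, φ′(ab) h₂⟫ dμ`
(for all `a, b ∈ A`, `h₁, h₂ ∈ H`, `g ∈ G`, `f ∈ L^∞(μ)`) iff the support of `μ`
is contained in `UCP_G(A, B(H))`.
-/

open scoped ComplexOrder ComplexInnerProductSpace
open MeasureTheory

noncomputable section

/-- The space of UCP maps `A → B(H)`, as a type. -/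
def UCPSpace (A : Type) [Ring A] [StarRing A] [Algebra ℂ A]
    (H : Type) [NormedAddCommGroup H] [InnerProductSpace ℂ H] [CompleteSpace H] : Type :=
  {φ : A → (H →L[ℂ] H) // IsUCPMap A H φ}

/-- The BW topology on `UCPSpace A H`: the topology of pointwise weak convergence. -/
instance UCPSpace.instTopologicalSpace (A : Type) [Ring A] [StarRing A] [Algebra ℂ A]
    (H : Type) [NormedAddCommGroup H] [InnerProductSpace ℂ H] [CompleteSpace H] :
    TopologicalSpace (UCPSpace A H) :=
  TopologicalSpace.induced
    (fun φ : UCPSpace A H => (fun p : A × H × H => ⟪p.2.1, (φ.1 p.1) p.2.2⟫ : A × H × H → ℂ))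
    inferInstance

/-- The Borel σ-algebra of the BW topology. -/
instance UCPSpace.instMeasurableSpace (A : Type) [Ring A] [StarRing A] [Algebra ℂ A]
    (H : Type) [NormedAddCommGroup H] [InnerProductSpace ℂ H] [CompleteSpace H] :
    MeasurableSpace (UCPSpace A H) := borel _

/-- `μ` is a (Borel probability) measure on `UCPSpace A H` with barycenter `φ`,
in the weak sense. -/
def HasBarycenter {A : Type} [Ring A] [StarRing A] [Algebra ℂ A]
    {H : Type} [NormedAddCommGroup H] [InnerProductSpace ℂ H] [CompleteSpace H]
    (μ : MeasureTheory.Measure (UCPSpace A H)) (φ : A → (H →L[ℂ] H)) : Prop :=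
  MeasureTheory.IsProbabilityMeasure μ ∧
  ∀ (a : A) (h₁ h₂ : H), ⟪h₁, φ a h₂⟫ = ∫ ψ, ⟪h₁, (ψ.1 a) h₂⟫ ∂μ

/-- `ψ` is the weak integral `∫_E φ′ dμ` of the identity over `E`. -/
def IsWeakIntegral {A : Type} [Ring A] [StarRing A] [Algebra ℂ A]
    {H : Type} [NormedAddCommGroup H] [InnerProductSpace ℂ H] [CompleteSpace H]
    (μ : MeasureTheory.Measure (UCPSpace A H)) (E : Set (UCPSpace A H))
    (ψ : A → (H →L[ℂ] H)) : Prop :=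
  ∀ (a : A) (h₁ h₂ : H), ⟪h₁, ψ a h₂⟫ = ∫ φ' in E, ⟪h₁, (φ'.1 a) h₂⟫ ∂μ

/-- `(ρ, V, K)` is a minimal Stinespring dilation of `φ : A → B(H)`. -/
def IsMinStinespring (A : Type) [Ring A] [StarRing A] [Algebra ℂ A]
    (H : Type) [NormedAddCommGroup H] [InnerProductSpace ℂ H] [CompleteSpace H]
    (K : Type) [NormedAddCommGroup K] [InnerProductSpace ℂ K] [CompleteSpace K]
    (φ : A → (H →L[ℂ] H)) (ρ : A → (K →L[ℂ] K)) (V : H →L[ℂ] K) : Prop :=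
  (∀ x y, ρ (x + y) = ρ x + ρ y) ∧
  (∀ (c : ℂ) (x : A), ρ (c • x) = c • ρ x) ∧
  (∀ x y, ρ (x * y) = ρ x * ρ y) ∧
  (∀ x, ρ (star x) = star (ρ x)) ∧
  ρ 1 = 1 ∧
  (∀ h, ‖V h‖ = ‖h‖) ∧
  (∀ a, φ a = ContinuousLinearMap.adjoint V ∘L (ρ a ∘L V)) ∧
  Dense (↑(Submodule.span ℂ {k : K | ∃ (a : A) (h : H), ρ a (V h) = k}) : Set K)

/-- The commutant of a set of operators. -/
def commutantSet {M : Type} [Mul M] (S : Set M) : Set M := {T | ∀ s ∈ S, s * T = T * s}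

/-- Two completely positive maps `φ₁ ⊥ φ₂`: for a minimal Stinespring dilation
`V* ρ V` of `φ₁ + φ₂` there is a projection `P ∈ ρ(A)′` with `φ₁ = V* P ρ(·) V` and
`φ₂ = V* (1 - P) ρ(·) V`. -/
def AreOrthogonal {A : Type} [Ring A] [StarRing A] [Algebra ℂ A]
    {H : Type} [NormedAddCommGroup H] [InnerProductSpace ℂ H] [CompleteSpace H]
    (φ₁ φ₂ : A → (H →L[ℂ] H)) : Prop :=
  ∃ (K : Type) (_ : NormedAddCommGroup K) (_ : InnerProductSpace ℂ K) (_ : CompleteSpace K),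
    ∃ (ρ : A → (K →L[ℂ] K)) (V : H →L[ℂ] K),
      IsMinStinespring A H K (fun a => φ₁ a + φ₂ a) ρ V ∧
      ∃ P : K →L[ℂ] K, P ∈ commutantSet (Set.range ρ) ∧ P * P = P ∧ star P = P ∧
        (∀ a, φ₁ a = ContinuousLinearMap.adjoint V ∘L (P ∘L (ρ a ∘L V))) ∧
        (∀ a, φ₂ a = ContinuousLinearMap.adjoint V ∘L ((1 - P) ∘L (ρ a ∘L V)))

/-- `μ` is a generalized orthogonal measure with barycenter `φ`:
for every Borel set `E`, `∫_E φ′ dμ ⊥ ∫_{Eᶜ} φ′ dμ`. -/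
def IsGenOrthogonal {A : Type} [Ring A] [StarRing A] [Algebra ℂ A]
    {H : Type} [NormedAddCommGroup H] [InnerProductSpace ℂ H] [CompleteSpace H]
    (μ : MeasureTheory.Measure (UCPSpace A H)) (φ : A → (H →L[ℂ] H)) : Prop :=
  HasBarycenter μ φ ∧
  ∀ E : Set (UCPSpace A H), MeasurableSet E →
    ∀ ψ₁ ψ₂ : A → (H →L[ℂ] H),
      IsWeakIntegral μ E ψ₁ → IsWeakIntegral μ Eᶜ ψ₂ → AreOrthogonal ψ₁ ψ₂

/-- The invariance condition on a measure `μ` on the UCP space: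
`∫ f(φ′) ⟪h₁, φ′(τ_{g⁻¹}(ab)) h₂⟫ dμ = ∫ f(φ′) ⟪h₁, φ′(ab) h₂⟫ dμ` for every bounded
measurable `f` (i.e. every `f ∈ L^∞(μ)`), all `g ∈ G`, `a, b ∈ A`, `h₁, h₂ ∈ H`. -/
def InvariantCondition {A : Type} [Ring A] [StarRing A] [Algebra ℂ A]
    {H : Type} [NormedAddCommGroup H] [InnerProductSpace ℂ H] [CompleteSpace H]
    {G : Type} [Group G] (τ : G → A ≃⋆ₐ[ℂ] A)
    (μ : MeasureTheory.Measure (UCPSpace A H)) : Prop :=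
  ∀ f : UCPSpace A H → ℂ, Measurable f → (∃ C : ℝ, ∀ ψ, ‖f ψ‖ ≤ C) →
    ∀ (g : G) (a b : A) (h₁ h₂ : H),
      ∫ ψ, f ψ * ⟪h₁, (ψ.1 (τ g⁻¹ (a * b))) h₂⟫ ∂μ =
        ∫ ψ, f ψ * ⟪h₁, (ψ.1 (a * b)) h₂⟫ ∂μ

section AuxLemmas
variable {A : Type} [CStarAlgebra A]
  {H : Type} [NormedAddCommGroup H] [InnerProductSpace ℂ H] [CompleteSpace H]

section UCP
variable {ψ : A → (H →L[ℂ] H)} (hψ : IsUCPMap A H ψ)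
include hψ

lemma ucp_pos (a : A) (h : H) : 0 ≤ ⟪h, ψ (star a * a) h⟫ := by
  have := hψ.1.2.2 1 ![a] ![h]
  simpa [Fin.sum_univ_one] using this

lemma ucp_two (a : A) (h₁ h₂ : H) :
    0 ≤ ⟪h₁, ψ (star a * a) h₁⟫ + ⟪h₁, ψ (star a) h₂⟫ + ⟪h₂, ψ a h₁⟫ + ⟪h₂, h₂⟫ := by
  have := hψ.1.2.2 2 ![a, 1] ![h₁, h₂]
  simp [Fin.sum_univ_two, hψ.2] at this
  convert this using 1
  simp [add_assoc]

end UCP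

section UCP2
variable {ψ : A → (H →L[ℂ] H)} (hψ : IsUCPMap A H ψ)
include hψ

lemma ucp_conj (a : A) (u h₁ : H) : ⟪u, ψ a h₁⟫ = starRingEnd ℂ ⟪h₁, ψ (star a) u⟫ := by
  set c₁ := ⟪h₁, ψ (star a) u⟫ with hc₁
  set c₂ := ⟪u, ψ a h₁⟫ with hc₂
  have key : ∀ z : ℂ, (z * c₁ + (starRingEnd ℂ) z * c₂).im = 0 := by
    intro z
    have h2 := ucp_two hψ a h₁ (z • u)
    have h0 := ucp_pos hψ a h₁
    simp only [_root_.map_smul, inner_smul_left, inner_smul_right] at h2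
    have him := (Complex.le_def.mp h2).2
    have him0 := (Complex.le_def.mp h0).2
    simp only [Complex.add_im, ← hc₁, ← hc₂, ← him0] at him
    have hinner : (z * ((starRingEnd ℂ) z * ⟪u, u⟫)).im = 0 := by
      rw [← mul_assoc, Complex.mul_im]
      have h1' : ⟪u, u⟫.im = 0 := inner_self_im (𝕜 := ℂ) u
      have h2' : (z * (starRingEnd ℂ) z).im = 0 := by
        simp [Complex.mul_im]; ring
      rw [h1', h2']; simp
    rw [Complex.add_im]
    simp only [Complex.zero_im] at him him0
    linarith [him]
  have k1 := key 1
  have kI := key Complex.I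
  simp [Complex.add_im, Complex.mul_im] at k1 kI
  apply Complex.ext <;> simp [Complex.conj_re, Complex.conj_im] <;> linarith

lemma ucp_star (a : A) : ψ (star a) = ContinuousLinearMap.adjoint (ψ a) := by
  rw [ContinuousLinearMap.eq_adjoint_iff]
  intro u h₁
  rw [← inner_conj_symm, ← ucp_conj hψ a u h₁]

end UCP2

lemma exists_sqrt_aux (a : A) :
    ∃ b : A, star b * b = ((‖a‖^2 : ℝ) : ℂ) • (1:A) - star a * a := by
  letI := CStarAlgebra.spectralOrder A
  haveI := CStarAlgebra.spectralOrderedRing A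
  have h1 : star a * a ≤ algebraMap ℝ A ‖star a * a‖ :=
    IsSelfAdjoint.le_algebraMap_norm_self (IsSelfAdjoint.star_mul_self a)
  have h0 : (0 : A) ≤ algebraMap ℝ A ‖star a * a‖ - star a * a := sub_nonneg.2 h1
  have hsa : IsSelfAdjoint (algebraMap ℝ A ‖star a * a‖ - star a * a) := by
    simpa using h0.1
  have hsr : QuasispectrumRestricts (algebraMap ℝ A ‖star a * a‖ - star a * a)
      ContinuousMap.realToNNReal := by
    simpa using h0.2
  obtain ⟨s, hs, -, hsq⟩ := CFC.exists_sqrt_of_isSelfAdjoint_of_quasispectrumRestricts hsa hsr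
  refine ⟨s, ?_⟩
  rw [hs.star_eq, hsq]
  congr 1
  rw [CStarRing.norm_star_mul_self, Algebra.algebraMap_eq_smul_one, ← sq]
  rw [Complex.coe_smul]

lemma inner_self_re' (x : H) : (⟪x, x⟫ : ℂ).re = ‖x‖^2 := by
  have := inner_self_eq_norm_sq (𝕜 := ℂ) x
  simpa using this

lemma inner_self_im' (x : H) : (⟪x, x⟫ : ℂ).im = 0 := inner_self_im (𝕜 := ℂ) x

section UCP3
variable {ψ : A → (H →L[ℂ] H)} (hψ : IsUCPMap A H ψ)
include hψ

lemma ucp_norm_bound (a : A) (h : H) : ‖ψ a h‖ ≤ ‖a‖ * ‖h‖ := by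
  -- Kadison-Schwarz step
  have h2 := ucp_two hψ a h (-(ψ a h))
  rw [ucp_star hψ a] at h2
  simp only [map_neg, inner_neg_left, inner_neg_right, neg_neg,
    ContinuousLinearMap.adjoint_inner_right] at h2
  -- h2 : 0 ≤ X - ⟪ψah,ψah⟫ - ⟪ψah,ψah⟫ + ⟪ψah,ψah⟫
  have hks : ‖ψ a h‖^2 ≤ (⟪h, ψ (star a * a) h⟫).re := by
    have := (Complex.le_def.mp h2).1
    simp only [Complex.add_re, Complex.sub_re, Complex.neg_re, Complex.zero_re] at this
    have hre : (⟪ψ a h, ψ a h⟫ : ℂ).re = ‖ψ a h‖^2 := inner_self_re' _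
    linarith
  -- bound X
  obtain ⟨b, hb⟩ := exists_sqrt_aux a
  have hsum : ψ (star a * a) + ψ (star b * b) = (((‖a‖^2:ℝ)):ℂ) • (1 : H →L[ℂ] H) := by
    rw [← hψ.1.1, ← hψ.2, ← hψ.1.2.1]
    congr 1
    rw [hb]
    abel
  have hX : (⟪h, ψ (star a * a) h⟫).re ≤ ‖a‖^2 * ‖h‖^2 := by
    have hY := ucp_pos hψ b h
    have hYre := (Complex.le_def.mp hY).1
    simp only [Complex.zero_re] at hYre
    have hadd : ⟪h, ψ (star a * a) h⟫ + ⟪h, ψ (star b * b) h⟫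
        = (((‖a‖^2:ℝ)):ℂ) * ⟪h, h⟫ := by
      rw [← inner_add_right]
      have : ψ (star a * a) h + ψ (star b * b) h = ((((‖a‖^2:ℝ)):ℂ) • (1 : H →L[ℂ] H)) h := by
        rw [← hsum]; rfl
      rw [this]
      simp [inner_smul_right]
    have := congrArg Complex.re hadd
    simp only [Complex.add_re] at this
    have hh : ((((‖a‖^2:ℝ)):ℂ) * ⟪h, h⟫).re = ‖a‖^2 * ‖h‖^2 := by
      rw [Complex.mul_re, Complex.ofReal_re, Complex.ofReal_im, inner_self_im',
        inner_self_re']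
      ring
    linarith
  nlinarith [norm_nonneg (ψ a h), norm_nonneg a, norm_nonneg h, mul_nonneg (norm_nonneg a) (norm_nonneg h)]

end UCP3

section Topology

variable (A : Type) [CStarAlgebra A]
  (H : Type) [NormedAddCommGroup H] [InnerProductSpace ℂ H] [CompleteSpace H]

instance UCPSpace.instBorelSpace : BorelSpace (UCPSpace A H) := ⟨rfl⟩

variable {A H}

lemma eval_continuous (a : A) (h₁ h₂ : H) :
    Continuous (fun ψ : UCPSpace A H => (⟪h₁, (ψ.1 a) h₂⟫ : ℂ)) := by
  have h1 : Continuous (fun ψ : UCPSpace A H =>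
      (fun p : A × H × H => (⟪p.2.1, (ψ.1 p.1) p.2.2⟫ : ℂ))) := continuous_induced_dom
  exact (continuous_apply ((a, h₁, h₂) : A × H × H)).comp h1

lemma ucp_op_norm_bound {ψ : A → (H →L[ℂ] H)} (hψ : IsUCPMap A H ψ) (a : A) :
    ‖ψ a‖ ≤ ‖a‖ :=
  ContinuousLinearMap.opNorm_le_bound _ (norm_nonneg a) (fun h => ucp_norm_bound hψ a h)

lemma ucp_map_sub {ψ : A → (H →L[ℂ] H)} (hψ : IsUCPMap A H ψ) (x y : A) :
    ψ (x - y) = ψ x - ψ y := by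
  have hneg : ψ (-y) = -ψ y := by
    have := hψ.1.2.1 (-1 : ℂ) y
    simpa using this
  rw [sub_eq_add_neg, hψ.1.1, hneg, sub_eq_add_neg]

lemma ucp_continuous {ψ : A → (H →L[ℂ] H)} (hψ : IsUCPMap A H ψ) : Continuous ψ := by
  have : LipschitzWith 1 ψ := by
    refine LipschitzWith.of_dist_le_mul (fun x y => ?_)
    rw [dist_eq_norm, dist_eq_norm, ← ucp_map_sub hψ x y]
    simpa using ucp_op_norm_bound hψ (x - y)
  exact this.continuous

lemma ucp_inner_bound {ψ : A → (H →L[ℂ] H)} (hψ : IsUCPMap A H ψ) (a : A) (h₁ h₂ : H) :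
    ‖(⟪h₁, (ψ a) h₂⟫ : ℂ)‖ ≤ ‖h₁‖ * (‖a‖ * ‖h₂‖) := by
  calc ‖(⟪h₁, (ψ a) h₂⟫ : ℂ)‖ ≤ ‖h₁‖ * ‖ψ a h₂‖ := norm_inner_le_norm _ _
  _ ≤ ‖h₁‖ * (‖a‖ * ‖h₂‖) := by
      exact mul_le_mul_of_nonneg_left (ucp_norm_bound hψ a h₂) (norm_nonneg h₁)

lemma op_ext_dense {T S : H →L[ℂ] H} {e : ℕ → H} (he : DenseRange e)
    (hTS : ∀ m k, (⟪e m, T (e k)⟫ : ℂ) = ⟪e m, S (e k)⟫) : T = S := by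
  have hrange : ∀ k, T (e k) = S (e k) := by
    intro k
    have hfun : (fun x : H => (⟪x, T (e k)⟫ : ℂ)) = fun x : H => (⟪x, S (e k)⟫ : ℂ) := by
      refine Continuous.ext_on he ?_ ?_ ?_
      · exact continuous_id.inner continuous_const
      · exact continuous_id.inner continuous_const
      · rintro _ ⟨m, rfl⟩
        exact hTS m k
    exact ext_inner_left ℂ (fun v => congrFun hfun v)
  have hfun : (fun h : H => T h) = fun h : H => S h := by
    refine Continuous.ext_on he T.continuous S.continuous ?_
    rintro _ ⟨k, rfl⟩
    exact hrange k
  exact ContinuousLinearMap.ext (fun h => congrFun hfun h)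

end Topology

section AEInv

variable {A : Type} [CStarAlgebra A]
  {H : Type} [NormedAddCommGroup H] [InnerProductSpace ℂ H] [CompleteSpace H]

lemma integrable_of_bdd {μ : Measure (UCPSpace A H)} [IsFiniteMeasure μ]
    {f : UCPSpace A H → ℂ} (hm : Measurable f) {C : ℝ} (hb : ∀ x, ‖f x‖ ≤ C) :
    Integrable f μ :=
  ⟨hm.aestronglyMeasurable, MeasureTheory.HasFiniteIntegral.of_bounded (ae_of_all _ hb)⟩

lemma ae_inner_invariant {G : Type} [Group G] (τ : G → A ≃⋆ₐ[ℂ] A)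
    (μ : Measure (UCPSpace A H)) [IsProbabilityMeasure μ]
    (hic : InvariantCondition τ μ) (g : G) (a : A) (h₁ h₂ : H) :
    ∀ᵐ ψ ∂μ, (⟪h₁, (ψ.1 (τ g a)) h₂⟫ : ℂ) = ⟪h₁, (ψ.1 a) h₂⟫ := by
  set X : UCPSpace A H → ℂ := fun ψ => ⟪h₁, (ψ.1 (τ g a)) h₂⟫ with hX
  set Y : UCPSpace A H → ℂ := fun ψ => ⟪h₁, (ψ.1 a) h₂⟫ with hY
  have hXc : Continuous X := eval_continuous (τ g a) h₁ h₂
  have hYc : Continuous Y := eval_continuous a h₁ h₂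
  have hdc : Continuous (fun ψ => X ψ - Y ψ) := hXc.sub hYc
  set f : UCPSpace A H → ℂ := fun ψ => (starRingEnd ℂ) (X ψ - Y ψ) with hf
  have hfc : Continuous f := hdc.star
  have hXb : ∀ ψ : UCPSpace A H, ‖X ψ‖ ≤ ‖h₁‖ * (‖τ g a‖ * ‖h₂‖) :=
    fun ψ => ucp_inner_bound ψ.2 (τ g a) h₁ h₂
  have hYb : ∀ ψ : UCPSpace A H, ‖Y ψ‖ ≤ ‖h₁‖ * (‖a‖ * ‖h₂‖) :=
    fun ψ => ucp_inner_bound ψ.2 a h₁ h₂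
  set C : ℝ := ‖h₁‖ * (‖τ g a‖ * ‖h₂‖) + ‖h₁‖ * (‖a‖ * ‖h₂‖) with hC
  have hfb : ∀ ψ, ‖f ψ‖ ≤ C := by
    intro ψ
    rw [hf]
    simp only [RCLike.norm_conj]
    exact le_trans (norm_sub_le _ _) (add_le_add (hXb ψ) (hYb ψ))
  have key := hic f hfc.measurable ⟨C, hfb⟩ g⁻¹ a 1 h₁ h₂
  simp only [mul_one, inv_inv] at key
  -- key : ∫ ψ, f ψ * X ψ ∂μ = ∫ ψ, f ψ * Y ψ ∂μ
  have hfX : Integrable (fun ψ => f ψ * X ψ) μ := by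
    refine integrable_of_bdd ((hfc.mul hXc).measurable)
      (C := C * (‖h₁‖ * (‖τ g a‖ * ‖h₂‖))) (fun ψ => ?_)
    rw [norm_mul]
    exact mul_le_mul (hfb ψ) (hXb ψ) (norm_nonneg _)
      (le_trans (norm_nonneg _) (hfb ψ))
  have hfY : Integrable (fun ψ => f ψ * Y ψ) μ := by
    refine integrable_of_bdd ((hfc.mul hYc).measurable)
      (C := C * (‖h₁‖ * (‖a‖ * ‖h₂‖))) (fun ψ => ?_)
    rw [norm_mul]
    exact mul_le_mul (hfb ψ) (hYb ψ) (norm_nonneg _)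
      (le_trans (norm_nonneg _) (hfb ψ))
  have hzero : ∫ ψ, f ψ * (X ψ - Y ψ) ∂μ = 0 := by
    have : (fun ψ => f ψ * (X ψ - Y ψ)) = fun ψ => f ψ * X ψ - f ψ * Y ψ := by
      funext ψ; ring
    rw [this, integral_sub hfX hfY, key, sub_self]
  have hptwise : ∀ ψ, f ψ * (X ψ - Y ψ) = ((‖X ψ - Y ψ‖^2 : ℝ) : ℂ) := by
    intro ψ
    rw [hf]
    rw [mul_comm, Complex.mul_conj]
    rw [Complex.normSq_eq_norm_sq]
  have hnormint : ∫ ψ, (‖X ψ - Y ψ‖^2 : ℝ) ∂μ = 0 := by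
    have h1 : ∫ ψ, ((‖X ψ - Y ψ‖^2 : ℝ) : ℂ) ∂μ = 0 := by
      rw [← hzero]
      exact integral_congr_ae (ae_of_all _ (fun ψ => (hptwise ψ).symm))
    have h2 : ∫ ψ, ((‖X ψ - Y ψ‖^2 : ℝ) : ℂ) ∂μ = ((∫ ψ, (‖X ψ - Y ψ‖^2 : ℝ) ∂μ : ℝ) : ℂ) :=
      integral_ofReal
    rw [h2] at h1
    exact_mod_cast h1
  have hint : Integrable (fun ψ => (‖X ψ - Y ψ‖^2 : ℝ)) μ := by
    refine ⟨((hdc.norm.pow 2).measurable).aestronglyMeasurable, ?_⟩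
    refine MeasureTheory.HasFiniteIntegral.of_bounded (C := C^2) (ae_of_all _ (fun ψ => ?_))
    have h2 : ‖X ψ - Y ψ‖ ≤ C := le_trans (norm_sub_le _ _) (add_le_add (hXb ψ) (hYb ψ))
    have h3 : (0:ℝ) ≤ ‖X ψ - Y ψ‖ := norm_nonneg _
    rw [Real.norm_eq_abs, abs_of_nonneg (by positivity)]
    nlinarith
  have haez := (integral_eq_zero_iff_of_nonneg (fun ψ => by positivity) hint).mp hnormint
  filter_upwards [haez] with ψ hψ
  have : ‖X ψ - Y ψ‖^2 = 0 := hψ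
  have h4 : X ψ - Y ψ = 0 := by
    rw [pow_eq_zero_iff (by norm_num), norm_eq_zero] at this
    exact this
  have := sub_eq_zero.mp h4
  exact this

end AEInv

section Main

variable {A : Type} [CStarAlgebra A]
  {H : Type} [NormedAddCommGroup H] [InnerProductSpace ℂ H] [CompleteSpace H]

lemma ucp_ext_of_dense {ψ : A → (H →L[ℂ] H)} (hψ : IsUCPMap A H ψ) (σ : A ≃⋆ₐ[ℂ] A)
    {dA : ℕ → A} (hdA : DenseRange dA) (h : ∀ n, ψ (σ (dA n)) = ψ (dA n)) :
    ∀ a, ψ (σ a) = ψ a := by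
  have hfun : (fun a : A => ψ (σ a)) = fun a : A => ψ a := by
    refine Continuous.ext_on hdA
      ((ucp_continuous hψ).comp (StarAlgEquiv.isometry σ).continuous)
      (ucp_continuous hψ) ?_
    rintro _ ⟨n, rfl⟩
    exact h n
  exact fun a => congrFun hfun a

lemma ae_invariant_of_ic {G : Type} [Group G] (τ : G → A ≃⋆ₐ[ℂ] A)
    (μ : Measure (UCPSpace A H)) [IsProbabilityMeasure μ] (hic : InvariantCondition τ μ)
    {dA : ℕ → A} (hdA : DenseRange dA) {dH : ℕ → H} (hdH : DenseRange dH) (g : G) :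
    ∀ᵐ ψ ∂μ, ∀ a : A, ψ.1 (τ g a) = ψ.1 a := by
  have hae : ∀ᵐ ψ ∂μ, ∀ n m k,
      (⟪dH m, (ψ.1 (τ g (dA n))) (dH k)⟫ : ℂ) = ⟪dH m, (ψ.1 (dA n)) (dH k)⟫ := by
    rw [MeasureTheory.ae_all_iff]
    intro n
    rw [MeasureTheory.ae_all_iff]
    intro m
    rw [MeasureTheory.ae_all_iff]
    intro k
    exact ae_inner_invariant τ μ hic g (dA n) (dH m) (dH k)
  filter_upwards [hae] with ψ hψ
  have hop : ∀ n, ψ.1 (τ g (dA n)) = ψ.1 (dA n) :=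
    fun n => op_ext_dense hdH (fun m k => hψ n m k)
  exact ucp_ext_of_dense ψ.2 (τ g) hdA hop

end Main

end AuxLemmas

theorem invariant_condition_iff_supported_on_invariant_ucp
    (A : Type) [CStarAlgebra A] [TopologicalSpace.SeparableSpace A]
    (H : Type) [NormedAddCommGroup H] [InnerProductSpace ℂ H] [CompleteSpace H]
    [TopologicalSpace.SeparableSpace H]
    (G : Type) [Group G] (τ : G → A ≃⋆ₐ[ℂ] A)
    (hτ : ∀ (g₁ g₂ : G) (a : A), τ (g₁ * g₂) a = τ g₁ (τ g₂ a))
    (φ : A → (H →L[ℂ] H)) (hφ : IsUCPMap A H φ)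
    (hφinv : ∀ (g : G) (a : A), φ (τ g a) = φ a)
    (μ : Measure (UCPSpace A H)) (hμ : IsGenOrthogonal μ φ) :
    InvariantCondition τ μ ↔
      μ {ψ : UCPSpace A H | ¬ ∀ (g : G) (a : A), ψ.1 (τ g a) = ψ.1 a} = 0 := by
  haveI : IsProbabilityMeasure μ := hμ.1.1
  haveI : Nonempty A := ⟨1⟩
  haveI : Nonempty H := ⟨0⟩
  obtain ⟨dA, hdA⟩ := TopologicalSpace.exists_dense_seq A
  obtain ⟨dH, hdH⟩ := TopologicalSpace.exists_dense_seq H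
  constructor
  · intro hic
    -- second countability of the orbit space
    haveI : SecondCountableTopology A := UniformSpace.secondCountable_of_separable A
    set Φ : G → (ℕ → A) := fun g n => τ g (dA n) with hΦ
    haveI : Nonempty (Set.range Φ) := ⟨⟨Φ 1, ⟨1, rfl⟩⟩⟩
    obtain ⟨u, hu⟩ := TopologicalSpace.exists_dense_seq (Set.range Φ)
    set t : ℕ → G := fun k => ((u k).2).choose with ht'
    have ht : ∀ k, Φ (t k) = (u k : ℕ → A) := fun k => ((u k).2).choose_spec
    have hNt : ∀ k : ℕ, μ {ψ : UCPSpace A H | ¬ ∀ a : A, ψ.1 (τ (t k) a) = ψ.1 a} = 0 :=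
      fun k => MeasureTheory.ae_iff.mp (ae_invariant_of_ic τ μ hic hdA hdH (t k))
    refine measure_mono_null ?_ (MeasureTheory.measure_iUnion_null hNt)
    intro ψ hψmem
    simp only [Set.mem_setOf_eq] at hψmem
    rw [Set.mem_iUnion]
    by_contra hc
    push_neg at hc
    have hc' : ∀ k a, ψ.1 (τ (t k) a) = ψ.1 a := by
      intro k
      have h9 := hc k
      simp only [Set.mem_setOf_eq, not_not] at h9
      push_neg at h9
      exact h9
    apply hψmem
    intro g
    -- closure argument
    have hZ : ∀ n, ψ.1 (τ g (dA n)) = ψ.1 (dA n) := by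
      set Z : Set (ℕ → A) := {x | ∀ n, ψ.1 (x n) = ψ.1 (dA n)} with hZdef
      have hZclosed : IsClosed Z := by
        have hZeq : Z = ⋂ n, (fun x : ℕ → A => ψ.1 (x n)) ⁻¹' {ψ.1 (dA n)} := by
          ext x
          simp [hZdef, Set.mem_iInter]
        rw [hZeq]
        exact isClosed_iInter fun n =>
          isClosed_singleton.preimage ((ucp_continuous ψ.2).comp (continuous_apply n))
      have hsub : Set.range (fun k => (u k : ℕ → A)) ⊆ Z := by
        rintro _ ⟨k, rfl⟩
        intro n
        show ψ.1 ((u k : ℕ → A) n) = ψ.1 (dA n)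
        rw [← ht k]
        exact hc' k (dA n)
      have hgmem : Φ g ∈ closure (Set.range fun k => (u k : ℕ → A)) := by
        have h5 : (⟨Φ g, ⟨g, rfl⟩⟩ : Set.range Φ) ∈ closure (Set.range u) := hu _
        rw [closure_subtype] at h5
        have h6 : Subtype.val '' Set.range u = Set.range fun k => (u k : ℕ → A) := by
          rw [← Set.range_comp]
          rfl
        rwa [h6] at h5
      have := hZclosed.closure_subset_iff.mpr hsub hgmem
      exact this
    exact ucp_ext_of_dense ψ.2 (τ g) hdA hZ
  · intro hnull f hf hbdd g a b h₁ h₂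
    have hae : ∀ᵐ ψ ∂μ, ∀ (g : G) (a : A), ψ.1 (τ g a) = ψ.1 a := by
      rw [MeasureTheory.ae_iff]
      exact hnull
    refine integral_congr_ae ?_
    filter_upwards [hae] with ψ hψ
    rw [hψ g⁻¹ (a * b)]
end
end

section
/- Let A be a unital separable C*-algebra, H a separable Hilbert space, G a group acting on A by τ : G → Aut(A), let φ ∈ UCP_G(A, B(H)) with minimal Stinespring dilation (ρ, V, K) and associated unitary representation U_φ of G on K. Then the map T ↦ φ_T := V* T ρ(·) V is an affine order isomorphism of the partially ordered convex set {T ∈ (ρ(A) ∪ U_φ(G))′ : 0 ≤ T ≤ 1_K} onto [0, φ] ∩ CP_G(A, B(H)). In particular, for T ∈ ρ(A)′ with 0 ≤ T ≤ 1_K, φ_T is G-invariant if and only if T commutes with every U_φ(g). -/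
/-!
STATEMENT 8: For `φ ∈ UCP_G(A, B(H))` with minimal Stinespring dilation `(ρ, V, K)` and
associated unitary representation `U_φ`, the map `T ↦ φ_T := V* T ρ(·) V` is an affine
order isomorphism of `{T ∈ (ρ(A) ∪ U_φ(G))′ : 0 ≤ T ≤ 1_K}` onto `[0, φ] ∩ CP_G(A, B(H))`.
In particular, for `T ∈ ρ(A)′` with `0 ≤ T ≤ 1_K`, `φ_T` is `G`-invariant iff `T`
commutes with every `U_φ(g)`.
-/

open scoped ComplexOrder ComplexInnerProductSpace

noncomputable section

/-- A positive operator on a Hilbert space. -/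
def IsPosOp {K : Type} [NormedAddCommGroup K] [InnerProductSpace ℂ K]
    (T : K →L[ℂ] K) : Prop :=
  ∀ ξ : K, 0 ≤ ⟪ξ, T ξ⟫

/-- The Radon–Nikodym type map `T ↦ φ_T = V* T ρ(·) V` of Arveson. -/
def phiT {A : Type} [Ring A] [StarRing A] [Algebra ℂ A]
    {H : Type} [NormedAddCommGroup H] [InnerProductSpace ℂ H] [CompleteSpace H]
    {K : Type} [NormedAddCommGroup K] [InnerProductSpace ℂ K] [CompleteSpace K]
    (ρ : A → (K →L[ℂ] K)) (V : H →L[ℂ] K) (T : K →L[ℂ] K) : A → (H →L[ℂ] H) :=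
  fun a => ContinuousLinearMap.adjoint V ∘L (T ∘L (ρ a ∘L V))

set_option linter.unusedSectionVars false
set_option linter.unusedVariables false


lemma dense_closed_univ {K : Type} [TopologicalSpace K] {s : Set K} (hd : Dense s)
    {p : K → Prop} (hc : IsClosed {x | p x}) (h : ∀ x ∈ s, p x) : ∀ x, p x := by
  intro x
  have h1 : closure s ⊆ {x | p x} := closure_minimal h hc
  have := hd.closure_eq
  exact h1 (by rw [this]; trivial)

lemma vec_ext {K : Type} [NormedAddCommGroup K] [InnerProductSpace ℂ K] {s : Set K}
    (hd : Dense s) {u v : K} (h : ∀ η ∈ s, ⟪η, u⟫ = ⟪η, v⟫) : u = v := by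
  have key : ∀ w : K, ⟪w, u - v⟫ = 0 := by
    refine dense_closed_univ hd ?_ ?_
    · exact isClosed_eq (Continuous.inner continuous_id continuous_const) continuous_const
    · intro w hw; rw [inner_sub_right, h w hw, sub_self]
  have := key (u - v)
  rw [inner_self_eq_zero] at this
  exact sub_eq_zero.mp this
section Fam

variable {A : Type} [Ring A] [StarRing A] [Algebra ℂ A]
    {H : Type} [NormedAddCommGroup H] [InnerProductSpace ℂ H] [CompleteSpace H]
    {K : Type} [NormedAddCommGroup K] [InnerProductSpace ℂ K] [CompleteSpace K]

/-- Formal finite families `(aᵢ, hᵢ)`. -/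
def Fam (A H : Type) : Type := Σ n : ℕ, (Fin n → A) × (Fin n → H)

variable (ρ : A → (K →L[ℂ] K)) (V : H →L[ℂ] K)

def Wfam (x : Fam A H) : K := ∑ i, ρ (x.2.1 i) (V (x.2.2 i))

def famβ (θ : A → (H →L[ℂ] H)) (x y : Fam A H) : ℂ :=
  ∑ i, ∑ j, ⟪x.2.2 i, θ (star (x.2.1 i) * y.2.1 j) (y.2.2 j)⟫

def famAppend (x y : Fam A H) : Fam A H :=
  ⟨x.1 + y.1, Fin.append x.2.1 y.2.1, Fin.append x.2.2 y.2.2⟩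

def famSmul (c : ℂ) (x : Fam A H) : Fam A H := ⟨x.1, x.2.1, fun i => c • x.2.2 i⟩

def famLmul (c : A) (x : Fam A H) : Fam A H := ⟨x.1, fun i => c * x.2.1 i, x.2.2⟩

def famMap (f : A → A) (x : Fam A H) : Fam A H := ⟨x.1, fun i => f (x.2.1 i), x.2.2⟩

def famSingle (a : A) (h : H) : Fam A H := ⟨1, fun _ => a, fun _ => h⟩

lemma Wfam_single (a : A) (h : H) : Wfam ρ V (famSingle a h) = ρ a (V h) := by
  show ∑ _i : Fin 1, ρ a (V h) = ρ a (V h)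
  simp [Wfam, famSingle]

lemma Wfam_append (x y : Fam A H) :
    Wfam ρ V (famAppend x y) = Wfam ρ V x + Wfam ρ V y := by
  classical
  unfold Wfam famAppend
  rw [Fin.sum_univ_add]
  simp

lemma Wfam_smul (c : ℂ) (x : Fam A H) : Wfam ρ V (famSmul c x) = c • Wfam ρ V x := by
  unfold Wfam famSmul
  rw [Finset.smul_sum]
  simp

lemma famβ_append_left (θ : A → (H →L[ℂ] H)) (x y z : Fam A H) :
    famβ θ (famAppend x y) z = famβ θ x z + famβ θ y z := by
  unfold famβ famAppend
  rw [Fin.sum_univ_add]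
  simp

lemma famβ_append_right (θ : A → (H →L[ℂ] H)) (x y z : Fam A H) :
    famβ θ z (famAppend x y) = famβ θ z x + famβ θ z y := by
  unfold famβ famAppend
  rw [← Finset.sum_add_distrib]
  refine Finset.sum_congr rfl fun i _ => ?_
  rw [Fin.sum_univ_add]
  simp

lemma famβ_smul_left (θ : A → (H →L[ℂ] H)) (c : ℂ) (x y : Fam A H) :
    famβ θ (famSmul c x) y = starRingEnd ℂ c * famβ θ x y := by
  unfold famβ famSmul
  rw [Finset.mul_sum]
  refine Finset.sum_congr rfl fun i _ => ?_
  rw [Finset.mul_sum]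
  refine Finset.sum_congr rfl fun j _ => ?_
  simp [inner_smul_left]; ring

lemma famβ_smul_right (θ : A → (H →L[ℂ] H)) (c : ℂ) (x y : Fam A H) :
    famβ θ x (famSmul c y) = c * famβ θ x y := by
  unfold famβ famSmul
  rw [Finset.mul_sum]
  refine Finset.sum_congr rfl fun i _ => ?_
  rw [Finset.mul_sum]
  refine Finset.sum_congr rfl fun j _ => ?_
  simp [inner_smul_right]

lemma famβ_pos {θ : A → (H →L[ℂ] H)} (hθ : IsCPMap A H θ) (x : Fam A H) :
    0 ≤ famβ θ x x := hθ.2.2 x.1 x.2.1 x.2.2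

lemma famβ_sub (θ₁ θ₂ : A → (H →L[ℂ] H)) (x y : Fam A H) :
    famβ (fun a => θ₁ a - θ₂ a) x y = famβ θ₁ x y - famβ θ₂ x y := by
  unfold famβ
  rw [← Finset.sum_sub_distrib]
  refine Finset.sum_congr rfl fun i _ => ?_
  rw [← Finset.sum_sub_distrib]
  refine Finset.sum_congr rfl fun j _ => ?_
  simp [inner_sub_right]

end Fam
section CS

variable {A : Type} [Ring A] [StarRing A] [Algebra ℂ A]
    {H : Type} [NormedAddCommGroup H] [InnerProductSpace ℂ H] [CompleteSpace H]

lemma famβ_expand (θ : A → (H →L[ℂ] H)) (x y : Fam A H) :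
    famβ θ (famAppend x y) (famAppend x y)
      = famβ θ x x + famβ θ x y + famβ θ y x + famβ θ y y := by
  rw [famβ_append_left, famβ_append_right, famβ_append_right]; ring

lemma famβ_quad {θ : A → (H →L[ℂ] H)} (hθ : IsCPMap A H θ) (x y : Fam A H) (s : ℂ) :
    0 ≤ famβ θ x x + s * famβ θ x y + starRingEnd ℂ s * famβ θ y x
        + starRingEnd ℂ s * (s * famβ θ y y) := by
  have := famβ_pos hθ (famAppend x (famSmul s y))
  rwa [famβ_expand, famβ_smul_right, famβ_smul_left, famβ_smul_left, famβ_smul_right] at this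

lemma famβ_conj {θ : A → (H →L[ℂ] H)} (hθ : IsCPMap A H θ) (x y : Fam A H) :
    famβ θ y x = starRingEnd ℂ (famβ θ x y) := by
  set B := famβ θ x y
  set C := famβ θ y x
  have hP := (Complex.nonneg_iff.mp (famβ_pos hθ x)).2
  have hQ := (Complex.nonneg_iff.mp (famβ_pos hθ y)).2
  have h1 := (Complex.nonneg_iff.mp (famβ_quad hθ x y 1)).2
  have h2 := (Complex.nonneg_iff.mp (famβ_quad hθ x y Complex.I)).2
  simp only [map_one, one_mul, Complex.add_im, Complex.mul_im, Complex.mul_re,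
    Complex.conj_im, Complex.conj_re, Complex.I_re, Complex.I_im, map_zero] at h1 h2
  apply Complex.ext
  · simp only [Complex.conj_re]; nlinarith [h1, h2, hP, hQ]
  · simp only [Complex.conj_im]; nlinarith [h1, h2, hP, hQ]

lemma famβ_CS {θ : A → (H →L[ℂ] H)} (hθ : IsCPMap A H θ) (x y : Fam A H) :
    ‖famβ θ x y‖ ^ 2 ≤ (famβ θ x x).re * (famβ θ y y).re := by
  set B := famβ θ x y with hB
  set p := (famβ θ x x).re
  set q := (famβ θ y y).re
  have hp : 0 ≤ p := (Complex.nonneg_iff.mp (famβ_pos hθ x)).1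
  have hq : 0 ≤ q := (Complex.nonneg_iff.mp (famβ_pos hθ y)).1
  have hPr : famβ θ x x = (p : ℂ) := by
    apply Complex.ext
    · rfl
    · exact ((Complex.nonneg_iff.mp (famβ_pos hθ x)).2).symm
  have hQr : famβ θ y y = (q : ℂ) := by
    apply Complex.ext
    · rfl
    · exact ((Complex.nonneg_iff.mp (famβ_pos hθ y)).2).symm
  by_cases hB0 : B = 0
  · rw [hB0]; simpa using mul_nonneg hp hq
  set n := Complex.normSq B with hn
  have hnpos : 0 < n := Complex.normSq_pos.mpr hB0
  -- quadratic inequality in t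
  have hquad : ∀ t : ℝ, 0 ≤ (n * q) * (t * t) + (-2 * n) * t + p := by
    intro t
    have h := famβ_quad hθ x y ((-t : ℝ) * (starRingEnd ℂ B))
    rw [famβ_conj hθ x y, hPr, hQr] at h
    have hexpr : (p : ℂ) + ((-t : ℝ) * starRingEnd ℂ B) * B
        + starRingEnd ℂ (((-t : ℝ) : ℂ) * starRingEnd ℂ B) * starRingEnd ℂ B
        + starRingEnd ℂ (((-t : ℝ) : ℂ) * starRingEnd ℂ B) * ((((-t : ℝ) : ℂ) * starRingEnd ℂ B) * (q : ℂ))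
        = ((p - 2 * t * n + (t * t) * (n * q) : ℝ) : ℂ) := by
      have hcB : starRingEnd ℂ B * B = (n : ℂ) := by
        rw [mul_comm, Complex.mul_conj]
      have hBc : B * starRingEnd ℂ B = (n : ℂ) := Complex.mul_conj B
      simp only [map_mul, Complex.conj_conj, Complex.conj_ofReal]
      push_cast
      linear_combination ((-2 * (t:ℂ)) + (t:ℂ)^2 * (q:ℂ)) * hcB
    rw [hexpr] at h
    have := (Complex.nonneg_iff.mp h).1
    simp only [Complex.ofReal_re] at this
    linarith
  have hd := discrim_le_zero hquad
  rw [discrim] at hd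
  have hnorm : ‖B‖ ^ 2 = n := by
    rw [hn, Complex.normSq_eq_norm_sq]
  nlinarith [hd, hnpos, hnorm]

end CS
section Stine

variable {A : Type} [Ring A] [StarRing A] [Algebra ℂ A]
    {H : Type} [NormedAddCommGroup H] [InnerProductSpace ℂ H] [CompleteSpace H]
    {K : Type} [NormedAddCommGroup K] [InnerProductSpace ℂ K] [CompleteSpace K]
    {φ : A → (H →L[ℂ] H)} {ρ : A → (K →L[ℂ] K)} {V : H →L[ℂ] K}

/-- The generating set of the minimal Stinespring space. -/
def genSet (ρ : A → (K →L[ℂ] K)) (V : H →L[ℂ] K) : Set K :=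
  {k : K | ∃ (a : A) (h : H), ρ a (V h) = k}

lemma rho_adj_inner (hmin : IsMinStinespring A H K φ ρ V) (a : A) (u w : K) :
    ⟪ρ a u, w⟫ = ⟪u, ρ (star a) w⟫ := by
  rw [hmin.2.2.2.1, ContinuousLinearMap.star_eq_adjoint,
    ContinuousLinearMap.adjoint_inner_right]

lemma V_adj_inner (hmin : IsMinStinespring A H K φ ρ V) (h : H) (w : K) :
    ⟪h, (ContinuousLinearMap.adjoint V) w⟫ = ⟪V h, w⟫ :=
  ContinuousLinearMap.adjoint_inner_right V h w

lemma V_inner (hmin : IsMinStinespring A H K φ ρ V) (h k : H) :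
    ⟪V h, V k⟫ = ⟪h, k⟫ := by
  let Viso : H →ₗᵢ[ℂ] K := ⟨V.toLinearMap, hmin.2.2.2.2.2.1⟩
  exact Viso.inner_map_map h k

/-- Key inner-product formula for `phiT`. -/
lemma phiT_inner (hmin : IsMinStinespring A H K φ ρ V) (T : K →L[ℂ] K) (a : A) (h k : H) :
    ⟪k, (phiT ρ V T a) h⟫ = ⟪V k, T (ρ a (V h))⟫ := by
  simp only [phiT, ContinuousLinearMap.comp_apply]
  rw [V_adj_inner hmin]

lemma famβ_phiT (hmin : IsMinStinespring A H K φ ρ V) {T : K →L[ℂ] K}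
    (hT : ∀ a : A, ρ a * T = T * ρ a) (x y : Fam A H) :
    famβ (phiT ρ V T) x y = ⟪Wfam ρ V x, T (Wfam ρ V y)⟫ := by
  obtain ⟨hadd, hsmul, hmul, hstar, hone, hiso, hrep, hdense⟩ := hmin
  unfold famβ Wfam
  rw [sum_inner]
  refine Finset.sum_congr rfl fun i _ => ?_
  rw [map_sum, inner_sum]
  refine Finset.sum_congr rfl fun j _ => ?_
  rw [phiT_inner ⟨hadd, hsmul, hmul, hstar, hone, hiso, hrep, hdense⟩]
  rw [hmul]
  have hcomm : (T ∘L ρ (star (x.2.1 i))) = (ρ (star (x.2.1 i)) ∘L T) := by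
    have := hT (star (x.2.1 i))
    exact this.symm
  calc ⟪V (x.2.2 i), T ((ρ (star (x.2.1 i)) * ρ (y.2.1 j)) (V (y.2.2 j)))⟫
      = ⟪V (x.2.2 i), (T ∘L ρ (star (x.2.1 i))) (ρ (y.2.1 j) (V (y.2.2 j)))⟫ := rfl
    _ = ⟪V (x.2.2 i), ρ (star (x.2.1 i)) (T (ρ (y.2.1 j) (V (y.2.2 j))))⟫ := by rw [hcomm]; rfl
    _ = ⟪ρ (x.2.1 i) (V (x.2.2 i)), T (ρ (y.2.1 j) (V (y.2.2 j)))⟫ :=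
        (rho_adj_inner ⟨hadd, hsmul, hmul, hstar, hone, hiso, hrep, hdense⟩ _ _ _).symm

lemma phiT_one (hmin : IsMinStinespring A H K φ ρ V) : phiT ρ V 1 = φ := by
  funext a
  rw [hmin.2.2.2.2.2.2.1 a]
  rfl

lemma famβ_phi_eq_inner (hmin : IsMinStinespring A H K φ ρ V) (x y : Fam A H) :
    famβ φ x y = ⟪Wfam ρ V x, Wfam ρ V y⟫ := by
  have := famβ_phiT hmin (T := 1) (fun a => by rw [mul_one, one_mul]) x y
  rw [phiT_one hmin] at this
  simpa using this

/-- The master bound for the Radon–Nikodym construction. -/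
lemma famβ_bound (hmin : IsMinStinespring A H K φ ρ V) {θ : A → (H →L[ℂ] H)}
    (hθ : IsCPMap A H θ) (hdiff : IsCPMap A H (fun a => φ a - θ a)) (x y : Fam A H) :
    ‖famβ θ x y‖ ≤ ‖Wfam ρ V x‖ * ‖Wfam ρ V y‖ := by
  have hx : (famβ θ x x).re ≤ ‖Wfam ρ V x‖ ^ 2 := by
    have h1 : 0 ≤ famβ (fun a => φ a - θ a) x x := famβ_pos hdiff x
    rw [famβ_sub] at h1
    have h2 := (Complex.nonneg_iff.mp h1).1
    rw [Complex.sub_re] at h2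
    have h3 : famβ φ x x = ((‖Wfam ρ V x‖ : ℂ)) ^ 2 := by
      rw [famβ_phi_eq_inner hmin, inner_self_eq_norm_sq_to_K]; norm_cast
    have h4 : (famβ φ x x).re = ‖Wfam ρ V x‖ ^ 2 := by
      rw [h3, ← Complex.ofReal_pow]; exact Complex.ofReal_re _
    linarith
  have hy : (famβ θ y y).re ≤ ‖Wfam ρ V y‖ ^ 2 := by
    have h1 : 0 ≤ famβ (fun a => φ a - θ a) y y := famβ_pos hdiff y
    rw [famβ_sub] at h1
    have h2 := (Complex.nonneg_iff.mp h1).1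
    rw [Complex.sub_re] at h2
    have h3 : famβ φ y y = ((‖Wfam ρ V y‖ : ℂ)) ^ 2 := by
      rw [famβ_phi_eq_inner hmin, inner_self_eq_norm_sq_to_K]; norm_cast
    have h4 : (famβ φ y y).re = ‖Wfam ρ V y‖ ^ 2 := by
      rw [h3, ← Complex.ofReal_pow]; exact Complex.ofReal_re _
    linarith
  have hcs := famβ_CS hθ x y
  have hp : 0 ≤ (famβ θ x x).re := (Complex.nonneg_iff.mp (famβ_pos hθ x)).1
  have hq : 0 ≤ (famβ θ y y).re := (Complex.nonneg_iff.mp (famβ_pos hθ y)).1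
  have : ‖famβ θ x y‖ ^ 2 ≤ (‖Wfam ρ V x‖ * ‖Wfam ρ V y‖) ^ 2 := by
    calc ‖famβ θ x y‖ ^ 2 ≤ (famβ θ x x).re * (famβ θ y y).re := hcs
    _ ≤ ‖Wfam ρ V x‖ ^ 2 * ‖Wfam ρ V y‖ ^ 2 := by
        apply mul_le_mul hx hy hq (by positivity)
    _ = (‖Wfam ρ V x‖ * ‖Wfam ρ V y‖) ^ 2 := by ring
  have h0 : (0:ℝ) ≤ ‖Wfam ρ V x‖ * ‖Wfam ρ V y‖ := by positivity
  nlinarith [norm_nonneg (famβ θ x y)]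

end Stine
section DenseLemmas

variable {A : Type} [Ring A] [StarRing A] [Algebra ℂ A]
    {H : Type} [NormedAddCommGroup H] [InnerProductSpace ℂ H] [CompleteSpace H]
    {K : Type} [NormedAddCommGroup K] [InnerProductSpace ℂ K] [CompleteSpace K]
    {φ : A → (H →L[ℂ] H)} (ρ : A → (K →L[ℂ] K)) (V : H →L[ℂ] K)

lemma Wfam_mem_span (x : Fam A H) :
    Wfam ρ V x ∈ Submodule.span ℂ (genSet ρ V) :=
  Submodule.sum_mem _ fun i _ => Submodule.subset_span ⟨x.2.1 i, x.2.2 i, rfl⟩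

lemma exists_fam {ξ : K} (hξ : ξ ∈ Submodule.span ℂ (genSet ρ V)) :
    ∃ x : Fam A H, Wfam ρ V x = ξ := by
  induction hξ using Submodule.span_induction with
  | mem ξ hm =>
    obtain ⟨a, h, rfl⟩ := hm
    exact ⟨famSingle a h, Wfam_single ρ V a h⟩
  | zero => exact ⟨⟨0, Fin.elim0, Fin.elim0⟩, by simp [Wfam]⟩
  | add u v hu hv ihu ihv =>
    obtain ⟨x, rfl⟩ := ihu
    obtain ⟨y, rfl⟩ := ihv
    exact ⟨famAppend x y, Wfam_append ρ V x y⟩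
  | smul c u hu ihu =>
    obtain ⟨x, rfl⟩ := ihu
    exact ⟨famSmul c x, Wfam_smul ρ V c x⟩

variable {ρ V}

lemma op_ext (hdense : Dense (↑(Submodule.span ℂ (genSet ρ V)) : Set K))
    (S : K →L[ℂ] K) (hS : ∀ (a b : A) (h k : H), ⟪ρ b (V k), S (ρ a (V h))⟫ = 0) :
    S = 0 := by
  have step1 : ∀ ξ ∈ genSet ρ V, S ξ = 0 := by
    rintro ξ ⟨a, h, rfl⟩
    have hM : ∀ η ∈ (↑(Submodule.span ℂ (genSet ρ V)) : Set K),
        ⟪η, S (ρ a (V h))⟫ = 0 := by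
      intro η hη
      induction hη using Submodule.span_induction with
      | mem η hm => obtain ⟨b, k, rfl⟩ := hm; exact hS a b h k
      | zero => simp
      | add u v hu hv ihu ihv => rw [inner_add_left, ihu, ihv, add_zero]
      | smul c u hu ihu => rw [inner_smul_left, ihu, mul_zero]
    have hall : ∀ w : K, ⟪w, S (ρ a (V h))⟫ = 0 := by
      refine dense_closed_univ hdense ?_ hM
      exact isClosed_eq (Continuous.inner continuous_id continuous_const) continuous_const
    have := hall (S (ρ a (V h)))
    rwa [inner_self_eq_zero] at this
  have step2 : ∀ ξ ∈ (↑(Submodule.span ℂ (genSet ρ V)) : Set K), S ξ = 0 := by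
    intro ξ hξ
    induction hξ using Submodule.span_induction with
    | mem ξ hm => exact step1 ξ hm
    | zero => simp
    | add u v hu hv ihu ihv => rw [map_add, ihu, ihv, add_zero]
    | smul c u hu ihu => rw [map_smul, ihu, smul_zero]
  ext w
  exact dense_closed_univ hdense
    (isClosed_eq S.continuous continuous_const) step2 w

lemma op_ext₂ (hdense : Dense (↑(Submodule.span ℂ (genSet ρ V)) : Set K))
    (S₁ S₂ : K →L[ℂ] K)
    (hS : ∀ (a b : A) (h k : H), ⟪ρ b (V k), S₁ (ρ a (V h))⟫ = ⟪ρ b (V k), S₂ (ρ a (V h))⟫) :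
    S₁ = S₂ := by
  have := op_ext hdense (S₁ - S₂) fun a b h k => by
    simp only [ContinuousLinearMap.sub_apply, inner_sub_right, hS a b h k, sub_self]
  have h2 : S₁ - S₂ = 0 := this
  rw [sub_eq_zero] at h2
  exact h2

lemma pos_ext (hdense : Dense (↑(Submodule.span ℂ (genSet ρ V)) : Set K))
    (S : K →L[ℂ] K) (hS : ∀ x : Fam A H, 0 ≤ ⟪Wfam ρ V x, S (Wfam ρ V x)⟫) :
    IsPosOp S := by
  intro ξ
  refine dense_closed_univ hdense (p := fun w => (0:ℂ) ≤ ⟪w, S w⟫) ?_ ?_ ξ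
  · have h1 : IsClosed {w : K | 0 ≤ (⟪w, S w⟫ : ℂ).re} :=
      isClosed_le continuous_const
        ((Complex.continuous_re).comp (Continuous.inner continuous_id S.continuous))
    have h2 : IsClosed {w : K | (0:ℝ) = (⟪w, S w⟫ : ℂ).im} :=
      isClosed_eq continuous_const
        ((Complex.continuous_im).comp (Continuous.inner continuous_id S.continuous))
    have : {w : K | 0 ≤ (⟪w, S w⟫ : ℂ)} = {w | 0 ≤ (⟪w, S w⟫ : ℂ).re} ∩
        {w | (0:ℝ) = (⟪w, S w⟫ : ℂ).im} := by
      ext w; simp [Complex.nonneg_iff, Set.mem_setOf_eq, Set.mem_inter_iff]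
    rw [this]
    exact h1.inter h2
  · intro η hη
    obtain ⟨x, rfl⟩ := exists_fam ρ V hη
    exact hS x

end DenseLemmas
section Construct

variable {A : Type} [Ring A] [StarRing A] [Algebra ℂ A]
    {H : Type} [NormedAddCommGroup H] [InnerProductSpace ℂ H] [CompleteSpace H]
    {K : Type} [NormedAddCommGroup K] [InnerProductSpace ℂ K] [CompleteSpace K]
    {φ : A → (H →L[ℂ] H)} {ρ : A → (K →L[ℂ] K)} {V : H →L[ℂ] K}
    {θ : A → (H →L[ℂ] H)}

lemma famβ_indep_left (hmin : IsMinStinespring A H K φ ρ V) (hθ : IsCPMap A H θ)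
    (hdiff : IsCPMap A H (fun a => φ a - θ a)) {x x' : Fam A H} (y : Fam A H)
    (hx : Wfam ρ V x = Wfam ρ V x') : famβ θ x y = famβ θ x' y := by
  have key : famβ θ (famAppend x (famSmul (-1) x')) y = famβ θ x y - famβ θ x' y := by
    rw [famβ_append_left, famβ_smul_left]
    simp only [map_neg, map_one]
    ring
  have hb := famβ_bound hmin hθ hdiff (famAppend x (famSmul (-1) x')) y
  rw [Wfam_append, Wfam_smul] at hb
  have hw : Wfam ρ V x + (-1 : ℂ) • Wfam ρ V x' = 0 := by
    rw [hx]; simp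
  rw [hw] at hb
  simp only [norm_zero, zero_mul] at hb
  have h0 : famβ θ (famAppend x (famSmul (-1) x')) y = 0 :=
    norm_le_zero_iff.mp hb
  rw [key] at h0
  exact sub_eq_zero.mp h0

lemma famβ_indep_right (hmin : IsMinStinespring A H K φ ρ V) (hθ : IsCPMap A H θ)
    (hdiff : IsCPMap A H (fun a => φ a - θ a)) (y : Fam A H) {x x' : Fam A H}
    (hx : Wfam ρ V x = Wfam ρ V x') : famβ θ y x = famβ θ y x' := by
  rw [famβ_conj hθ x y, famβ_conj hθ x' y, famβ_indep_left hmin hθ hdiff y hx]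

/-- A chosen representing family for each element of the dense span. -/
def famRep (ρ : A → (K →L[ℂ] K)) (V : H →L[ℂ] K)
    (ξ : Submodule.span ℂ (genSet ρ V)) : Fam A H :=
  (exists_fam ρ V ξ.2).choose

lemma famRep_spec (ξ : Submodule.span ℂ (genSet ρ V)) :
    Wfam ρ V (famRep ρ V ξ) = (ξ : K) :=
  (exists_fam ρ V ξ.2).choose_spec

/-- The sesquilinear form on the span, via chosen representatives. -/
def BB (ρ : A → (K →L[ℂ] K)) (V : H →L[ℂ] K) (θ : A → (H →L[ℂ] H))
    (η ξ : Submodule.span ℂ (genSet ρ V)) : ℂ :=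
  famβ θ (famRep ρ V η) (famRep ρ V ξ)

lemma BB_eq (hmin : IsMinStinespring A H K φ ρ V) (hθ : IsCPMap A H θ)
    (hdiff : IsCPMap A H (fun a => φ a - θ a))
    {η ξ : Submodule.span ℂ (genSet ρ V)} {x y : Fam A H}
    (hy : Wfam ρ V y = (η : K)) (hx : Wfam ρ V x = (ξ : K)) :
    BB ρ V θ η ξ = famβ θ y x := by
  unfold BB
  rw [famβ_indep_left hmin hθ hdiff _ (x' := y) (by rw [famRep_spec, hy]),
    famβ_indep_right hmin hθ hdiff _ (x' := x) (by rw [famRep_spec, hx])]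

lemma BB_bound (hmin : IsMinStinespring A H K φ ρ V) (hθ : IsCPMap A H θ)
    (hdiff : IsCPMap A H (fun a => φ a - θ a))
    (η ξ : Submodule.span ℂ (genSet ρ V)) :
    ‖BB ρ V θ η ξ‖ ≤ ‖(η : K)‖ * ‖(ξ : K)‖ := by
  have := famβ_bound hmin hθ hdiff (famRep ρ V η) (famRep ρ V ξ)
  rwa [famRep_spec, famRep_spec] at this

lemma BB_add_left (hmin : IsMinStinespring A H K φ ρ V) (hθ : IsCPMap A H θ)
    (hdiff : IsCPMap A H (fun a => φ a - θ a))
    (η₁ η₂ ξ : Submodule.span ℂ (genSet ρ V)) :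
    BB ρ V θ (η₁ + η₂) ξ = BB ρ V θ η₁ ξ + BB ρ V θ η₂ ξ := by
  rw [BB_eq hmin hθ hdiff (y := famAppend (famRep ρ V η₁) (famRep ρ V η₂))
      (x := famRep ρ V ξ)
      (by rw [Wfam_append, famRep_spec, famRep_spec]; rfl) (famRep_spec ξ),
    famβ_append_left]
  rfl

lemma BB_smul_left (hmin : IsMinStinespring A H K φ ρ V) (hθ : IsCPMap A H θ)
    (hdiff : IsCPMap A H (fun a => φ a - θ a)) (c : ℂ)
    (η ξ : Submodule.span ℂ (genSet ρ V)) :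
    BB ρ V θ (c • η) ξ = starRingEnd ℂ c * BB ρ V θ η ξ := by
  rw [BB_eq hmin hθ hdiff (y := famSmul c (famRep ρ V η)) (x := famRep ρ V ξ)
      (by rw [Wfam_smul, famRep_spec]; rfl) (famRep_spec ξ), famβ_smul_left]
  rfl

lemma BB_add_right (hmin : IsMinStinespring A H K φ ρ V) (hθ : IsCPMap A H θ)
    (hdiff : IsCPMap A H (fun a => φ a - θ a))
    (η ξ₁ ξ₂ : Submodule.span ℂ (genSet ρ V)) :
    BB ρ V θ η (ξ₁ + ξ₂) = BB ρ V θ η ξ₁ + BB ρ V θ η ξ₂ := by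
  rw [BB_eq hmin hθ hdiff (y := famRep ρ V η)
      (x := famAppend (famRep ρ V ξ₁) (famRep ρ V ξ₂)) (famRep_spec η)
      (by rw [Wfam_append, famRep_spec, famRep_spec]; rfl),
    famβ_append_right]
  rfl

lemma BB_smul_right (hmin : IsMinStinespring A H K φ ρ V) (hθ : IsCPMap A H θ)
    (hdiff : IsCPMap A H (fun a => φ a - θ a)) (c : ℂ)
    (η ξ : Submodule.span ℂ (genSet ρ V)) :
    BB ρ V θ η (c • ξ) = c * BB ρ V θ η ξ := by
  rw [BB_eq hmin hθ hdiff (y := famRep ρ V η) (x := famSmul c (famRep ρ V ξ))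
      (famRep_spec η) (by rw [Wfam_smul, famRep_spec]; rfl), famβ_smul_right]
  rfl

/-- The continuous functional `η ↦ conj (BB η ξ)` on the span. -/
def LfunC (hmin : IsMinStinespring A H K φ ρ V) (hθ : IsCPMap A H θ)
    (hdiff : IsCPMap A H (fun a => φ a - θ a))
    (ξ : Submodule.span ℂ (genSet ρ V)) :
    Submodule.span ℂ (genSet ρ V) →L[ℂ] ℂ :=
  LinearMap.mkContinuous
    { toFun := fun η => starRingEnd ℂ (BB ρ V θ η ξ)
      map_add' := fun η₁ η₂ => by
        rw [BB_add_left hmin hθ hdiff, map_add]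
      map_smul' := fun c η => by
        rw [BB_smul_left hmin hθ hdiff, map_mul, Complex.conj_conj, smul_eq_mul]; rfl }
    ‖(ξ : K)‖
    (fun η => by
      simp only [LinearMap.coe_mk, AddHom.coe_mk, RCLike.norm_conj]
      rw [mul_comm]
      exact BB_bound hmin hθ hdiff η ξ)

lemma denseRange_subtypeL (hdense : Dense (↑(Submodule.span ℂ (genSet ρ V)) : Set K)) :
    DenseRange (Submodule.span ℂ (genSet ρ V)).subtypeL := by
  have : Set.range (Submodule.span ℂ (genSet ρ V)).subtypeL
      = (↑(Submodule.span ℂ (genSet ρ V)) : Set K) := Subtype.range_coe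
  rw [DenseRange, this]
  exact hdense

lemma isUniformInducing_subtypeL :
    IsUniformInducing ((Submodule.span ℂ (genSet ρ V)).subtypeL : _ →L[ℂ] K) :=
  (Submodule.span ℂ (genSet ρ V)).subtypeₗᵢ.isometry.isUniformInducing

/-- The extension of the functional to all of `K`. -/
def Fext (hmin : IsMinStinespring A H K φ ρ V) (hθ : IsCPMap A H θ)
    (hdiff : IsCPMap A H (fun a => φ a - θ a))
    (ξ : Submodule.span ℂ (genSet ρ V)) : K →L[ℂ] ℂ :=
  (LfunC hmin hθ hdiff ξ).extend (Submodule.span ℂ (genSet ρ V)).subtypeL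

lemma Fext_eq (hmin : IsMinStinespring A H K φ ρ V) (hθ : IsCPMap A H θ)
    (hdiff : IsCPMap A H (fun a => φ a - θ a))
    (ξ η : Submodule.span ℂ (genSet ρ V)) :
    Fext hmin hθ hdiff ξ (η : K) = starRingEnd ℂ (BB ρ V θ η ξ) :=
  by
    have h := ContinuousLinearMap.extend_eq (LfunC hmin hθ hdiff ξ) (denseRange_subtypeL hmin.2.2.2.2.2.2.2) isUniformInducing_subtypeL η
    have h2 : LfunC hmin hθ hdiff ξ η = starRingEnd ℂ (BB ρ V θ η ξ) := rfl
    rw [h2] at h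
    exact h

/-- The Radon–Nikodym operator on the span. -/
def T0 (hmin : IsMinStinespring A H K φ ρ V) (hθ : IsCPMap A H θ)
    (hdiff : IsCPMap A H (fun a => φ a - θ a))
    (ξ : Submodule.span ℂ (genSet ρ V)) : K :=
  (InnerProductSpace.toDual ℂ K).symm (Fext hmin hθ hdiff ξ)

lemma T0_inner (hmin : IsMinStinespring A H K φ ρ V) (hθ : IsCPMap A H θ)
    (hdiff : IsCPMap A H (fun a => φ a - θ a))
    (ξ η : Submodule.span ℂ (genSet ρ V)) :
    ⟪(η : K), T0 hmin hθ hdiff ξ⟫ = BB ρ V θ η ξ := by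
  have h1 : ⟪T0 hmin hθ hdiff ξ, (η : K)⟫ = starRingEnd ℂ (BB ρ V θ η ξ) := by
    unfold T0
    rw [InnerProductSpace.toDual_symm_apply]
    exact Fext_eq hmin hθ hdiff ξ η
  rw [← inner_conj_symm, h1, Complex.conj_conj]

end Construct
section ConstructT

variable {A : Type} [Ring A] [StarRing A] [Algebra ℂ A]
    {H : Type} [NormedAddCommGroup H] [InnerProductSpace ℂ H] [CompleteSpace H]
    {K : Type} [NormedAddCommGroup K] [InnerProductSpace ℂ K] [CompleteSpace K]
    {φ : A → (H →L[ℂ] H)} {ρ : A → (K →L[ℂ] K)} {V : H →L[ℂ] K}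
    {θ : A → (H →L[ℂ] H)}

lemma T0_norm_le (hmin : IsMinStinespring A H K φ ρ V) (hθ : IsCPMap A H θ)
    (hdiff : IsCPMap A H (fun a => φ a - θ a))
    (ξ : Submodule.span ℂ (genSet ρ V)) :
    ‖T0 hmin hθ hdiff ξ‖ ≤ ‖(ξ : K)‖ := by
  have h1 : ‖T0 hmin hθ hdiff ξ‖ = ‖Fext hmin hθ hdiff ξ‖ :=
    LinearIsometryEquiv.norm_map _ _
  rw [h1]
  refine ContinuousLinearMap.opNorm_le_bound _ (norm_nonneg _) ?_
  refine dense_closed_univ hmin.2.2.2.2.2.2.2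
    (p := fun w => ‖Fext hmin hθ hdiff ξ w‖ ≤ ‖(ξ : K)‖ * ‖w‖) ?_ ?_
  · exact isClosed_le ((Fext hmin hθ hdiff ξ).continuous.norm)
      (continuous_const.mul continuous_norm)
  · intro η hη
    have he := Fext_eq hmin hθ hdiff ξ ⟨η, hη⟩
    simp only [Submodule.coe_subtypeL] at he
    rw [show η = ((⟨η, hη⟩ : Submodule.span ℂ (genSet ρ V)) : K) from rfl, he,
      RCLike.norm_conj, mul_comm]
    exact BB_bound hmin hθ hdiff ⟨η, hη⟩ ξ

lemma T0_add (hmin : IsMinStinespring A H K φ ρ V) (hθ : IsCPMap A H θ)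
    (hdiff : IsCPMap A H (fun a => φ a - θ a))
    (ξ₁ ξ₂ : Submodule.span ℂ (genSet ρ V)) :
    T0 hmin hθ hdiff (ξ₁ + ξ₂) = T0 hmin hθ hdiff ξ₁ + T0 hmin hθ hdiff ξ₂ := by
  refine vec_ext hmin.2.2.2.2.2.2.2 fun w hw => ?_
  rw [show w = ((⟨w, hw⟩ : Submodule.span ℂ (genSet ρ V)) : K) from rfl,
    T0_inner hmin hθ hdiff, inner_add_right, T0_inner hmin hθ hdiff,
    T0_inner hmin hθ hdiff, BB_add_right hmin hθ hdiff]

lemma T0_smul (hmin : IsMinStinespring A H K φ ρ V) (hθ : IsCPMap A H θ)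
    (hdiff : IsCPMap A H (fun a => φ a - θ a)) (c : ℂ)
    (ξ : Submodule.span ℂ (genSet ρ V)) :
    T0 hmin hθ hdiff (c • ξ) = c • T0 hmin hθ hdiff ξ := by
  refine vec_ext hmin.2.2.2.2.2.2.2 fun w hw => ?_
  rw [show w = ((⟨w, hw⟩ : Submodule.span ℂ (genSet ρ V)) : K) from rfl,
    T0_inner hmin hθ hdiff, inner_smul_right, T0_inner hmin hθ hdiff,
    BB_smul_right hmin hθ hdiff]

/-- The Radon–Nikodym operator `T`. -/
def TRN (hmin : IsMinStinespring A H K φ ρ V) (hθ : IsCPMap A H θ)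
    (hdiff : IsCPMap A H (fun a => φ a - θ a)) : K →L[ℂ] K :=
  (LinearMap.mkContinuous
    { toFun := T0 hmin hθ hdiff
      map_add' := T0_add hmin hθ hdiff
      map_smul' := T0_smul hmin hθ hdiff } 1
    (fun ξ => by
      rw [one_mul]
      exact le_trans (T0_norm_le hmin hθ hdiff ξ) (le_of_eq (Submodule.norm_coe ξ)))).extend
    (Submodule.span ℂ (genSet ρ V)).subtypeL

lemma TRN_apply (hmin : IsMinStinespring A H K φ ρ V) (hθ : IsCPMap A H θ)
    (hdiff : IsCPMap A H (fun a => φ a - θ a))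
    (ξ : Submodule.span ℂ (genSet ρ V)) :
    TRN hmin hθ hdiff (ξ : K) = T0 hmin hθ hdiff ξ :=
  by
    have h := ContinuousLinearMap.extend_eq (LinearMap.mkContinuous
      ({ toFun := T0 hmin hθ hdiff
         map_add' := T0_add hmin hθ hdiff
         map_smul' := T0_smul hmin hθ hdiff } : Submodule.span ℂ (genSet ρ V) →ₗ[ℂ] K) 1
      (fun ξ => by
        rw [one_mul]
        exact le_trans (T0_norm_le hmin hθ hdiff ξ) (le_of_eq (Submodule.norm_coe ξ)))) (denseRange_subtypeL hmin.2.2.2.2.2.2.2) isUniformInducing_subtypeL ξ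
    exact h

lemma TRN_char (hmin : IsMinStinespring A H K φ ρ V) (hθ : IsCPMap A H θ)
    (hdiff : IsCPMap A H (fun a => φ a - θ a)) (x y : Fam A H) :
    ⟪Wfam ρ V y, TRN hmin hθ hdiff (Wfam ρ V x)⟫ = famβ θ y x := by
  rw [show Wfam ρ V x = ((⟨Wfam ρ V x, Wfam_mem_span ρ V x⟩ :
      Submodule.span ℂ (genSet ρ V)) : K) from rfl, TRN_apply hmin hθ hdiff,
    show Wfam ρ V y = ((⟨Wfam ρ V y, Wfam_mem_span ρ V y⟩ :
      Submodule.span ℂ (genSet ρ V)) : K) from rfl, T0_inner hmin hθ hdiff]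
  exact BB_eq hmin hθ hdiff rfl rfl

lemma famβ_single_eq (θ : A → (H →L[ℂ] H)) (b : A) (k : H) (a : A) (h : H) :
    famβ θ (famSingle b k) (famSingle a h) = ⟪k, θ (star b * a) h⟫ := by
  show ∑ _i : Fin 1, ∑ _j : Fin 1, ⟪k, θ (star b * a) h⟫ = _
  simp [famβ, famSingle]

lemma TRN_pos (hmin : IsMinStinespring A H K φ ρ V) (hθ : IsCPMap A H θ)
    (hdiff : IsCPMap A H (fun a => φ a - θ a)) : IsPosOp (TRN hmin hθ hdiff) := by
  refine pos_ext hmin.2.2.2.2.2.2.2 _ fun x => ?_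
  rw [TRN_char hmin hθ hdiff]
  exact famβ_pos hθ x

lemma TRN_one_sub_pos (hmin : IsMinStinespring A H K φ ρ V) (hθ : IsCPMap A H θ)
    (hdiff : IsCPMap A H (fun a => φ a - θ a)) : IsPosOp (1 - TRN hmin hθ hdiff) := by
  refine pos_ext hmin.2.2.2.2.2.2.2 _ fun x => ?_
  rw [ContinuousLinearMap.sub_apply, ContinuousLinearMap.one_apply, inner_sub_right,
    TRN_char hmin hθ hdiff]
  have h1 : ⟪Wfam ρ V x, Wfam ρ V x⟫ = famβ φ x x := (famβ_phi_eq_inner hmin x x).symm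
  rw [h1]
  have := famβ_pos hdiff x
  rwa [famβ_sub] at this

lemma rho_adj_inner' (hmin : IsMinStinespring A H K φ ρ V) (b : A) (u w : K) :
    ⟪u, ρ b w⟫ = ⟪ρ (star b) u, w⟫ := by
  rw [rho_adj_inner hmin (star b) u w, star_star]

lemma TRN_comm_rho (hmin : IsMinStinespring A H K φ ρ V) (hθ : IsCPMap A H θ)
    (hdiff : IsCPMap A H (fun a => φ a - θ a)) (b : A) :
    ρ b * TRN hmin hθ hdiff = TRN hmin hθ hdiff * ρ b := by
  refine op_ext₂ hmin.2.2.2.2.2.2.2 _ _ fun a b' h k => ?_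
  have e1 : (ρ b * TRN hmin hθ hdiff) (ρ a (V h))
      = ρ b (TRN hmin hθ hdiff (ρ a (V h))) := rfl
  have e2 : (TRN hmin hθ hdiff * ρ b) (ρ a (V h))
      = TRN hmin hθ hdiff (ρ (b * a) (V h)) := by
    have h3 : ρ (b * a) (V h) = ρ b (ρ a (V h)) := by rw [hmin.2.2.1 b a]; rfl
    rw [h3]; rfl
  rw [e1, e2, rho_adj_inner' hmin b]
  have e3 : ρ (star b) (ρ b' (V k)) = ρ (star b * b') (V k) := by
    rw [hmin.2.2.1 (star b) b']; rfl
  rw [e3, ← Wfam_single ρ V (star b * b') k, ← Wfam_single ρ V a h,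
    ← Wfam_single ρ V b' k, ← Wfam_single ρ V (b * a) h,
    TRN_char hmin hθ hdiff, TRN_char hmin hθ hdiff, famβ_single_eq, famβ_single_eq,
    star_mul, star_star, mul_assoc]

lemma TRN_phiT (hmin : IsMinStinespring A H K φ ρ V) (hθ : IsCPMap A H θ)
    (hdiff : IsCPMap A H (fun a => φ a - θ a)) :
    θ = phiT ρ V (TRN hmin hθ hdiff) := by
  funext a
  refine ContinuousLinearMap.ext fun h => ?_
  refine ext_inner_left ℂ fun k => ?_
  rw [phiT_inner hmin]
  have e1 : V k = Wfam ρ V (famSingle (1 : A) k) := by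
    rw [Wfam_single, hmin.2.2.2.2.1]; rfl
  rw [e1, ← Wfam_single ρ V a h, TRN_char hmin hθ hdiff, famβ_single_eq,
    star_one, one_mul]

end ConstructT
section GroupLemmas

variable {A : Type} [Ring A] [StarRing A] [Algebra ℂ A]
    {H : Type} [NormedAddCommGroup H] [InnerProductSpace ℂ H] [CompleteSpace H]
    {K : Type} [NormedAddCommGroup K] [InnerProductSpace ℂ K] [CompleteSpace K]
    {φ : A → (H →L[ℂ] H)} {ρ : A → (K →L[ℂ] K)} {V : H →L[ℂ] K}
    {G : Type} [Group G] {τ : G → A ≃⋆ₐ[ℂ] A} {U : G → (K →L[ℂ] K)}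

lemma tau_one (hτ : ∀ (g₁ g₂ : G) (a : A), τ (g₁ * g₂) a = τ g₁ (τ g₂ a)) (a : A) :
    τ (1 : G) a = a := by
  have h := hτ 1 1 a
  rw [one_mul] at h
  exact ((τ (1:G)).injective h).symm

lemma tau_inv_cancel (hτ : ∀ (g₁ g₂ : G) (a : A), τ (g₁ * g₂) a = τ g₁ (τ g₂ a))
    (g : G) (a : A) : τ g⁻¹ (τ g a) = a := by
  rw [← hτ g⁻¹ g a, inv_mul_cancel, tau_one hτ]

lemma U_one (hU : ∀ g : G, star (U g) * U g = 1 ∧ U g * star (U g) = 1)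
    (hUmul : ∀ g₁ g₂ : G, U (g₁ * g₂) = U g₁ * U g₂) : U (1 : G) = 1 := by
  have h := hUmul 1 1
  rw [one_mul] at h
  calc U (1:G) = (star (U (1:G)) * U (1:G)) * U (1:G) := by rw [(hU 1).1, one_mul]
    _ = star (U (1:G)) * (U (1:G) * U (1:G)) := by rw [mul_assoc]
    _ = star (U (1:G)) * U (1:G) := by rw [← h]
    _ = 1 := (hU 1).1

lemma U_star (hU : ∀ g : G, star (U g) * U g = 1 ∧ U g * star (U g) = 1)
    (hUmul : ∀ g₁ g₂ : G, U (g₁ * g₂) = U g₁ * U g₂) (g : G) :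
    star (U g) = U g⁻¹ := by
  have h1 : U g * U g⁻¹ = 1 := by rw [← hUmul g g⁻¹, mul_inv_cancel, U_one hU hUmul]
  calc star (U g) = star (U g) * (U g * U g⁻¹) := by rw [h1, mul_one]
    _ = (star (U g) * U g) * U g⁻¹ := by rw [mul_assoc]
    _ = U g⁻¹ := by rw [(hU g).1, one_mul]

lemma U_rho_V (hU : ∀ g : G, star (U g) * U g = 1 ∧ U g * star (U g) = 1)
    (hUV : ∀ (g : G) (h : H), (U g) (V h) = V h)
    (hUρ : ∀ (g : G) (a : A), U g * ρ a * star (U g) = ρ (τ g a))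
    (g : G) (a : A) (h : H) : U g (ρ a (V h)) = ρ (τ g a) (V h) := by
  rw [← hUρ g a]
  have hsV : star (U g) (V h) = V h := by
    conv_lhs => rw [← hUV g h]
    have h2 : star (U g) (U g (V h)) = (star (U g) * U g) (V h) := rfl
    rw [h2, (hU g).1]; rfl
  have h3 : (U g * ρ a * star (U g)) (V h) = U g (ρ a (star (U g) (V h))) := rfl
  rw [h3, hsV]

lemma Wfam_gmap (hU : ∀ g : G, star (U g) * U g = 1 ∧ U g * star (U g) = 1)
    (hUV : ∀ (g : G) (h : H), (U g) (V h) = V h)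
    (hUρ : ∀ (g : G) (a : A), U g * ρ a * star (U g) = ρ (τ g a))
    (g : G) (x : Fam A H) :
    Wfam ρ V (famMap (τ g) x) = U g (Wfam ρ V x) := by
  unfold Wfam famMap
  rw [map_sum]
  exact Finset.sum_congr rfl fun i _ => (U_rho_V hU hUV hUρ g _ _).symm

lemma V_adj_U (hmin : IsMinStinespring A H K φ ρ V)
    (hU : ∀ g : G, star (U g) * U g = 1 ∧ U g * star (U g) = 1)
    (hUmul : ∀ g₁ g₂ : G, U (g₁ * g₂) = U g₁ * U g₂)
    (hUV : ∀ (g : G) (h : H), (U g) (V h) = V h) (g : G) (w : K) :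
    ContinuousLinearMap.adjoint V (U g w) = ContinuousLinearMap.adjoint V w := by
  refine ext_inner_left ℂ fun k => ?_
  rw [V_adj_inner hmin, V_adj_inner hmin,
    ← ContinuousLinearMap.adjoint_inner_left (U g) w (V k),
    ← ContinuousLinearMap.star_eq_adjoint, U_star hU hUmul, hUV g⁻¹ k]

end GroupLemmas
section MainLemmas

variable {A : Type} [Ring A] [StarRing A] [Algebra ℂ A]
    {H : Type} [NormedAddCommGroup H] [InnerProductSpace ℂ H] [CompleteSpace H]
    {K : Type} [NormedAddCommGroup K] [InnerProductSpace ℂ K] [CompleteSpace K]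
    {φ : A → (H →L[ℂ] H)} {ρ : A → (K →L[ℂ] K)} {V : H →L[ℂ] K}
    {G : Type} [Group G] {τ : G → A ≃⋆ₐ[ℂ] A} {U : G → (K →L[ℂ] K)}
    {θ : A → (H →L[ℂ] H)}

lemma TRN_comm_U (hmin : IsMinStinespring A H K φ ρ V) (hθ : IsCPMap A H θ)
    (hdiff : IsCPMap A H (fun a => φ a - θ a))
    (hτ : ∀ (g₁ g₂ : G) (a : A), τ (g₁ * g₂) a = τ g₁ (τ g₂ a))
    (hU : ∀ g : G, star (U g) * U g = 1 ∧ U g * star (U g) = 1)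
    (hUmul : ∀ g₁ g₂ : G, U (g₁ * g₂) = U g₁ * U g₂)
    (hUV : ∀ (g : G) (h : H), (U g) (V h) = V h)
    (hUρ : ∀ (g : G) (a : A), U g * ρ a * star (U g) = ρ (τ g a))
    (hθinv : ∀ (g : G) (a : A), θ (τ g a) = θ a) (g : G) :
    U g * TRN hmin hθ hdiff = TRN hmin hθ hdiff * U g := by
  refine op_ext₂ hmin.2.2.2.2.2.2.2 _ _ fun a b' h k => ?_
  have e1 : (U g * TRN hmin hθ hdiff) (ρ a (V h))
      = U g (TRN hmin hθ hdiff (ρ a (V h))) := rfl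
  have e2 : (TRN hmin hθ hdiff * U g) (ρ a (V h))
      = TRN hmin hθ hdiff (ρ (τ g a) (V h)) := by
    have h4 : (TRN hmin hθ hdiff * U g) (ρ a (V h))
        = TRN hmin hθ hdiff (U g (ρ a (V h))) := rfl
    rw [h4, U_rho_V hU hUV hUρ g a h]
  rw [e1, e2]
  have e3 : ⟪ρ b' (V k), U g (TRN hmin hθ hdiff (ρ a (V h)))⟫
      = ⟪ρ (τ g⁻¹ b') (V k), TRN hmin hθ hdiff (ρ a (V h))⟫ := by
    rw [← ContinuousLinearMap.adjoint_inner_left (U g)]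
    congr 1
    rw [← ContinuousLinearMap.star_eq_adjoint, U_star hU hUmul]
    exact U_rho_V hU hUV hUρ g⁻¹ b' k
  rw [e3, ← Wfam_single ρ V (τ g⁻¹ b') k, ← Wfam_single ρ V a h,
    ← Wfam_single ρ V b' k, ← Wfam_single ρ V (τ g a) h,
    TRN_char hmin hθ hdiff, TRN_char hmin hθ hdiff, famβ_single_eq, famβ_single_eq]
  have e4 : star (τ g⁻¹ b') * a = τ g⁻¹ (star b' * τ g a) := by
    rw [map_mul, map_star, tau_inv_cancel hτ]
  rw [e4, hθinv g⁻¹]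

/-- `φ_T` is completely positive when `T` is positive and commutes with `ρ`. -/
lemma cp_of_comm_pos (hmin : IsMinStinespring A H K φ ρ V) (T : K →L[ℂ] K)
    (hTρ : ∀ a : A, ρ a * T = T * ρ a) (hTpos : IsPosOp T) :
    IsCPMap A H (phiT ρ V T) := by
  refine ⟨?_, ?_, ?_⟩
  · intro x y
    refine ContinuousLinearMap.ext fun h => ?_
    have : ρ (x + y) (V h) = ρ x (V h) + ρ y (V h) := by rw [hmin.1 x y]; rfl
    simp [phiT, this, map_add]
  · intro c x
    refine ContinuousLinearMap.ext fun h => ?_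
    have : ρ (c • x) (V h) = c • ρ x (V h) := by rw [hmin.2.1 c x]; rfl
    simp [phiT, this, map_smul]
  · intro n a h
    have e : ∑ i, ∑ j, ⟪h i, (phiT ρ V T (star (a i) * a j)) (h j)⟫
        = famβ (phiT ρ V T) ⟨n, a, h⟩ ⟨n, a, h⟩ := rfl
    rw [e]
    exact (hTpos _).trans_eq (famβ_phiT hmin hTρ _ _).symm

lemma phiT_one_sub (hmin : IsMinStinespring A H K φ ρ V) (T : K →L[ℂ] K) :
    (fun a => φ a - phiT ρ V T a) = phiT ρ V (1 - T) := by
  funext a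
  refine ContinuousLinearMap.ext fun h => ?_
  rw [hmin.2.2.2.2.2.2.1 a]
  simp [phiT, map_sub]

/-- `φ_T` is `G`-invariant when `T` commutes with all `U g`. -/
lemma phiT_inv_of_commU (hmin : IsMinStinespring A H K φ ρ V) (T : K →L[ℂ] K)
    (hU : ∀ g : G, star (U g) * U g = 1 ∧ U g * star (U g) = 1)
    (hUmul : ∀ g₁ g₂ : G, U (g₁ * g₂) = U g₁ * U g₂)
    (hUV : ∀ (g : G) (h : H), (U g) (V h) = V h)
    (hUρ : ∀ (g : G) (a : A), U g * ρ a * star (U g) = ρ (τ g a))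
    (hTU : ∀ g : G, T * U g = U g * T) (g : G) (a : A) :
    phiT ρ V T (τ g a) = phiT ρ V T a := by
  refine ContinuousLinearMap.ext fun h => ?_
  have e1 : ρ (τ g a) (V h) = U g (ρ a (V h)) := (U_rho_V hU hUV hUρ g a h).symm
  have e2 : T (U g (ρ a (V h))) = U g (T (ρ a (V h))) := by
    have h4 : (T * U g) (ρ a (V h)) = (U g * T) (ρ a (V h)) := by rw [hTU g]
    exact h4
  show ContinuousLinearMap.adjoint V (T (ρ (τ g a) (V h)))
      = ContinuousLinearMap.adjoint V (T (ρ a (V h)))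
  rw [e1, e2, V_adj_U hmin hU hUmul hUV]

/-- G-invariance of `φ_T` implies `T` commutes with all `U g`. -/
lemma commU_of_inv (hmin : IsMinStinespring A H K φ ρ V) (T : K →L[ℂ] K)
    (hτ : ∀ (g₁ g₂ : G) (a : A), τ (g₁ * g₂) a = τ g₁ (τ g₂ a))
    (hU : ∀ g : G, star (U g) * U g = 1 ∧ U g * star (U g) = 1)
    (hUmul : ∀ g₁ g₂ : G, U (g₁ * g₂) = U g₁ * U g₂)
    (hUV : ∀ (g : G) (h : H), (U g) (V h) = V h)
    (hUρ : ∀ (g : G) (a : A), U g * ρ a * star (U g) = ρ (τ g a))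
    (hTρ : ∀ a : A, ρ a * T = T * ρ a)
    (hinv : ∀ (g : G) (a : A), phiT ρ V T (τ g a) = phiT ρ V T a) (g : G) :
    T * U g = U g * T := by
  refine op_ext₂ hmin.2.2.2.2.2.2.2 _ _ fun a b' h k => ?_
  have key : ∀ (b c : A), ⟪ρ b (V k), T (ρ c (V h))⟫ = ⟪k, phiT ρ V T (star b * c) h⟫ := by
    intro b c
    rw [phiT_inner hmin]
    rw [rho_adj_inner hmin b (V k) (T (ρ c (V h)))]
    have h5 : ρ (star b) (T (ρ c (V h))) = T (ρ (star b) (ρ c (V h))) := by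
      have := hTρ (star b)
      calc ρ (star b) (T (ρ c (V h))) = (ρ (star b) * T) (ρ c (V h)) := rfl
        _ = (T * ρ (star b)) (ρ c (V h)) := by rw [this]
        _ = T (ρ (star b) (ρ c (V h))) := rfl
    have h6 : ρ (star b) (ρ c (V h)) = ρ (star b * c) (V h) := by
      rw [hmin.2.2.1 (star b) c]; rfl
    rw [h5, h6]
  have e1 : (T * U g) (ρ a (V h)) = T (ρ (τ g a) (V h)) := by
    have h4 : (T * U g) (ρ a (V h)) = T (U g (ρ a (V h))) := rfl
    rw [h4, U_rho_V hU hUV hUρ g a h]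
  have e2 : ⟪ρ b' (V k), (U g * T) (ρ a (V h))⟫
      = ⟪ρ (τ g⁻¹ b') (V k), T (ρ a (V h))⟫ := by
    have h4 : (U g * T) (ρ a (V h)) = U g (T (ρ a (V h))) := rfl
    rw [h4, ← ContinuousLinearMap.adjoint_inner_left (U g)]
    congr 1
    rw [← ContinuousLinearMap.star_eq_adjoint, U_star hU hUmul]
    exact U_rho_V hU hUV hUρ g⁻¹ b' k
  rw [e1, e2, key b' (τ g a), key (τ g⁻¹ b') a]
  have e4 : star (τ g⁻¹ b') * a = τ g⁻¹ (star b' * τ g a) := by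
    rw [map_mul, map_star, tau_inv_cancel hτ]
  rw [e4, hinv g⁻¹]

/-- order isomorphism, backward direction. -/
lemma pos_of_cp (hmin : IsMinStinespring A H K φ ρ V) (T₁ T₂ : K →L[ℂ] K)
    (hT₁ρ : ∀ a : A, ρ a * T₁ = T₁ * ρ a) (hT₂ρ : ∀ a : A, ρ a * T₂ = T₂ * ρ a)
    (hcp : IsCPMap A H (fun a => phiT ρ V T₂ a - phiT ρ V T₁ a)) :
    IsPosOp (T₂ - T₁) := by
  refine pos_ext hmin.2.2.2.2.2.2.2 _ fun x => ?_
  rw [ContinuousLinearMap.sub_apply, inner_sub_right,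
    ← famβ_phiT hmin hT₂ρ x x, ← famβ_phiT hmin hT₁ρ x x, ← famβ_sub]
  exact famβ_pos hcp x

/-- injectivity. -/
lemma phiT_inj (hmin : IsMinStinespring A H K φ ρ V) (T₁ T₂ : K →L[ℂ] K)
    (hT₁ρ : ∀ a : A, ρ a * T₁ = T₁ * ρ a) (hT₂ρ : ∀ a : A, ρ a * T₂ = T₂ * ρ a)
    (heq : phiT ρ V T₁ = phiT ρ V T₂) : T₁ = T₂ := by
  refine op_ext₂ hmin.2.2.2.2.2.2.2 _ _ fun a b h k => ?_
  rw [← Wfam_single ρ V b k, ← Wfam_single ρ V a h,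
    ← famβ_phiT hmin hT₁ρ, ← famβ_phiT hmin hT₂ρ, heq]

end MainLemmas
lemma phiT_sub {A : Type} [Ring A] [StarRing A] [Algebra ℂ A]
    {H : Type} [NormedAddCommGroup H] [InnerProductSpace ℂ H] [CompleteSpace H]
    {K : Type} [NormedAddCommGroup K] [InnerProductSpace ℂ K] [CompleteSpace K]
    (ρ : A → (K →L[ℂ] K)) (V : H →L[ℂ] K) (T₁ T₂ : K →L[ℂ] K) :
    (fun a => phiT ρ V T₂ a - phiT ρ V T₁ a) = phiT ρ V (T₂ - T₁) := by
  funext a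
  refine ContinuousLinearMap.ext fun h => ?_
  simp [phiT, map_sub]

theorem radon_nikodym_G_invariant_stinespring
    (A : Type) [CStarAlgebra A] [TopologicalSpace.SeparableSpace A]
    (H : Type) [NormedAddCommGroup H] [InnerProductSpace ℂ H] [CompleteSpace H]
    [TopologicalSpace.SeparableSpace H]
    (G : Type) [Group G] (τ : G → A ≃⋆ₐ[ℂ] A)
    (hτ : ∀ (g₁ g₂ : G) (a : A), τ (g₁ * g₂) a = τ g₁ (τ g₂ a))
    (φ : A → (H →L[ℂ] H)) (hφ : IsUCPMap A H φ)
    (hφinv : ∀ (g : G) (a : A), φ (τ g a) = φ a)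
    (K : Type) [NormedAddCommGroup K] [InnerProductSpace ℂ K] [CompleteSpace K]
    (ρ : A → (K →L[ℂ] K)) (V : H →L[ℂ] K)
    (hmin : IsMinStinespring A H K φ ρ V)
    (U : G → (K →L[ℂ] K))
    (hU : ∀ g, star (U g) * U g = 1 ∧ U g * star (U g) = 1)
    (hUmul : ∀ g₁ g₂, U (g₁ * g₂) = U g₁ * U g₂)
    (hUV : ∀ (g : G) (h : H), (U g) (V h) = V h)
    (hUρ : ∀ (g : G) (a : A), U g * ρ a * star (U g) = ρ (τ g a)) :
    -- the map `T ↦ φ_T` sends the operator interval into `[0, φ] ∩ CP_G`: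
    (∀ T ∈ commutantSet (Set.range ρ ∪ Set.range U), IsPosOp T → IsPosOp (1 - T) →
      IsCPMap A H (phiT ρ V T) ∧ IsCPMap A H (fun a => φ a - phiT ρ V T a) ∧
        ∀ (g : G) (a : A), phiT ρ V T (τ g a) = phiT ρ V T a) ∧
    -- injectivity:
    (∀ T₁ ∈ commutantSet (Set.range ρ ∪ Set.range U),
      ∀ T₂ ∈ commutantSet (Set.range ρ ∪ Set.range U),
      IsPosOp T₁ → IsPosOp (1 - T₁) → IsPosOp T₂ → IsPosOp (1 - T₂) →
      phiT ρ V T₁ = phiT ρ V T₂ → T₁ = T₂) ∧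
    -- surjectivity onto `[0, φ] ∩ CP_G`:
    (∀ θ : A → (H →L[ℂ] H), IsCPMap A H θ → IsCPMap A H (fun a => φ a - θ a) →
      (∀ (g : G) (a : A), θ (τ g a) = θ a) →
      ∃ T ∈ commutantSet (Set.range ρ ∪ Set.range U),
        IsPosOp T ∧ IsPosOp (1 - T) ∧ θ = phiT ρ V T) ∧
    -- order isomorphism:
    (∀ T₁ ∈ commutantSet (Set.range ρ ∪ Set.range U),
      ∀ T₂ ∈ commutantSet (Set.range ρ ∪ Set.range U),
      IsPosOp T₁ → IsPosOp (1 - T₁) → IsPosOp T₂ → IsPosOp (1 - T₂) →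
      (IsPosOp (T₂ - T₁) ↔ IsCPMap A H (fun a => phiT ρ V T₂ a - phiT ρ V T₁ a))) ∧
    -- affineness:
    (∀ T₁ T₂ : K →L[ℂ] K, ∀ t : ℝ, 0 ≤ t → t ≤ 1 →
      phiT ρ V ((t : ℂ) • T₁ + ((1 - t : ℝ) : ℂ) • T₂) =
        fun a => (t : ℂ) • phiT ρ V T₁ a + ((1 - t : ℝ) : ℂ) • phiT ρ V T₂ a) ∧
    -- in particular, for `T ∈ ρ(A)′` with `0 ≤ T ≤ 1`:
    (∀ T ∈ commutantSet (Set.range ρ), IsPosOp T → IsPosOp (1 - T) →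
      ((∀ (g : G) (a : A), phiT ρ V T (τ g a) = phiT ρ V T a) ↔
        ∀ g : G, T * U g = U g * T)) := by
  have hcρ : ∀ T ∈ commutantSet (Set.range ρ ∪ Set.range U), ∀ a : A, ρ a * T = T * ρ a :=
    fun T hT a => hT (ρ a) (Or.inl ⟨a, rfl⟩)
  have hcU : ∀ T ∈ commutantSet (Set.range ρ ∪ Set.range U), ∀ g : G, U g * T = T * U g :=
    fun T hT g => hT (U g) (Or.inr ⟨g, rfl⟩)
  have hsubcomm : ∀ (T : K →L[ℂ] K), (∀ a : A, ρ a * T = T * ρ a) →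
      ∀ a : A, ρ a * (1 - T) = (1 - T) * ρ a := by
    intro T hT a
    rw [mul_sub, sub_mul, mul_one, one_mul, hT a]
  refine ⟨?_, ?_, ?_, ?_, ?_, ?_⟩
  · -- maps into [0, φ] ∩ CP_G
    intro T hT hpos hpos1
    refine ⟨cp_of_comm_pos hmin T (hcρ T hT) hpos, ?_, ?_⟩
    · rw [phiT_one_sub hmin T]
      exact cp_of_comm_pos hmin (1 - T) (hsubcomm T (hcρ T hT)) hpos1
    · exact phiT_inv_of_commU hmin T hU hUmul hUV hUρ (fun g => (hcU T hT g).symm)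
  · -- injectivity
    intro T₁ h1 T₂ h2 _ _ _ _ heq
    exact phiT_inj hmin T₁ T₂ (hcρ _ h1) (hcρ _ h2) heq
  · -- surjectivity
    intro θ hθ hdiff hθinv
    refine ⟨TRN hmin hθ hdiff, ?_, TRN_pos hmin hθ hdiff, TRN_one_sub_pos hmin hθ hdiff,
      TRN_phiT hmin hθ hdiff⟩
    rintro s (⟨a, rfl⟩ | ⟨g, rfl⟩)
    · exact TRN_comm_rho hmin hθ hdiff a
    · exact TRN_comm_U hmin hθ hdiff hτ hU hUmul hUV hUρ hθinv g
  · -- order isomorphism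
    intro T₁ h1 T₂ h2 _ _ _ _
    constructor
    · intro hpos
      rw [phiT_sub ρ V T₁ T₂]
      refine cp_of_comm_pos hmin (T₂ - T₁) ?_ hpos
      intro a
      rw [mul_sub, sub_mul, hcρ _ h1 a, hcρ _ h2 a]
    · intro hcp
      exact pos_of_cp hmin T₁ T₂ (hcρ _ h1) (hcρ _ h2) hcp
  · -- affineness
    intro T₁ T₂ t _ _
    funext a
    refine ContinuousLinearMap.ext fun h => ?_
    simp [phiT, map_add, map_smul]
  · -- G-invariance iff commutation with U
    intro T hT hpos hpos1
    constructor
    · intro hinv g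
      exact commU_of_inv hmin T hτ hU hUmul hUV hUρ
        (fun a => hT (ρ a) ⟨a, rfl⟩) hinv g
    · intro hTU g a
      exact phiT_inv_of_commU hmin T hU hUmul hUV hUρ hTU g a
end
end
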